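/- arXiv:2402.10377 — 5 statements merged into one kernel-verified Lean document; each statement's English description precedes it below -/
import Mathlib

section
/- Let n ≥ 1, 1 < p < ∞, 0 < q₁ < p−1, 0 < q₂ < p−1, 0 < α < n/p, and let σ be a nonnegative Radon measure on ℝⁿ. There exists a constant c > 0 depending only on n, p, α, q₁ and q₂ such that every nontrivial supersolution (u,v) of the Wolff integral system (u and v not σ-a.e. zero) satisfies u(x) ≥ c (W_{α,p}σ(x))^{γ₁} and v(x) ≥ c (W_{α,p}σ(x))^{γ₂} for σ-a.e. x ∈ ℝⁿ. -/
open MeasureTheory Metric Set ENNReal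

noncomputable section

/-- Euclidean space `ℝⁿ`. -/
abbrev Rn (n : ℕ) := EuclideanSpace ℝ (Fin n)

/-- The Wolff potential `W_{α,p}μ(x) = ∫₀^∞ (μ(B(x,t))/t^{n−αp})^{1/(p−1)} dt/t`. -/
def wolff (n : ℕ) (α p : ℝ) (μ : Measure (Rn n)) (x : Rn n) : ℝ≥0∞ :=
  ∫⁻ t in Ioi (0 : ℝ),
    (μ (ball x t) / ENNReal.ofReal (t ^ ((n : ℝ) - α * p))) ^ (1 / (p - 1))
      * ENNReal.ofReal (1 / t)

/-- `γ₁ = (p−1)(p−1+q₁)/((p−1)²−q₁q₂)`. -/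
def gamma1 (p q₁ q₂ : ℝ) : ℝ := (p - 1) * (p - 1 + q₁) / ((p - 1) ^ 2 - q₁ * q₂)

/-- `γ₂ = (p−1)(p−1+q₂)/((p−1)²−q₁q₂)`. -/
def gamma2 (p q₁ q₂ : ℝ) : ℝ := (p - 1) * (p - 1 + q₂) / ((p - 1) ^ 2 - q₁ * q₂)

/-- The Riesz potential `I_β μ(x) = ∫ |x−y|^{β−n} dμ(y)`. -/
def riesz (n : ℕ) (β : ℝ) (μ : Measure (Rn n)) (x : Rn n) : ℝ≥0∞ :=
  ∫⁻ y, ENNReal.ofReal (‖x - y‖ ^ (β - (n : ℝ))) ∂μ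

/-- The `(α,p)`-capacity of a set `E ⊆ ℝⁿ`. -/
def capacity (n : ℕ) (α p : ℝ) (E : Set (Rn n)) : ℝ≥0∞ :=
  ⨅ (f : Rn n → ℝ≥0∞) (_ : Measurable f)
    (_ : ∀ x ∈ E, 1 ≤ riesz n α (volume.withDensity f) x),
    ∫⁻ x, f x ^ p

/-- Condition (F): `∫₁^∞ (σ(B(0,t))/t^{n−αp})^{1/(p−1)} dt/t < ∞`. -/
def condF (n : ℕ) (α p : ℝ) (σ : Measure (Rn n)) : Prop :=
  ∫⁻ t in Ioi (1 : ℝ),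
    (σ (ball (0 : Rn n) t) / ENNReal.ofReal (t ^ ((n : ℝ) - α * p))) ^ (1 / (p - 1))
      * ENNReal.ofReal (1 / t) < ∞

/-- Condition (C): `σ(E) ≤ C_σ · cap_{α,p}(E)` for all compact sets `E`. -/
def condC (n : ℕ) (α p Cσ : ℝ) (σ : Measure (Rn n)) : Prop :=
  ∀ E : Set (Rn n), IsCompact E → σ E ≤ ENNReal.ofReal Cσ * capacity n α p E

/-- `u ∈ L^s_loc(ℝⁿ, dσ)`: `∫_B u^s dσ < ∞` for every ball `B`. -/
def locIn (n : ℕ) (σ : Measure (Rn n)) (s : ℝ) (u : Rn n → ℝ≥0∞) : Prop :=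
  ∀ (x : Rn n) (r : ℝ), ∫⁻ y in ball x r, u y ^ s ∂σ < ∞

/-- `(u,v)` is a solution of the Wolff integral system. -/
def isWolffSol (n : ℕ) (α p q₁ q₂ : ℝ) (σ : Measure (Rn n))
    (u v : Rn n → ℝ≥0∞) : Prop :=
  Measurable u ∧ Measurable v ∧ locIn n σ q₂ u ∧ locIn n σ q₁ v ∧
  (∀ᵐ x ∂σ, u x = wolff n α p (σ.withDensity fun y => v y ^ q₁) x) ∧
  (∀ᵐ x ∂σ, v x = wolff n α p (σ.withDensity fun y => u y ^ q₂) x)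

/-- `(u,v)` is a supersolution of the Wolff integral system. -/
def isWolffSuper (n : ℕ) (α p q₁ q₂ : ℝ) (σ : Measure (Rn n))
    (u v : Rn n → ℝ≥0∞) : Prop :=
  Measurable u ∧ Measurable v ∧ locIn n σ q₂ u ∧ locIn n σ q₁ v ∧
  (∀ᵐ x ∂σ, wolff n α p (σ.withDensity fun y => v y ^ q₁) x ≤ u x) ∧
  (∀ᵐ x ∂σ, wolff n α p (σ.withDensity fun y => u y ^ q₂) x ≤ v x)

/-- `(u,v)` is nontrivial: neither `u` nor `v` vanishes `σ`-a.e. -/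
def nontrivialPair (n : ℕ) (σ : Measure (Rn n)) (u v : Rn n → ℝ≥0∞) : Prop :=
  ¬ (∀ᵐ x ∂σ, u x = 0) ∧ ¬ (∀ᵐ x ∂σ, v x = 0)

/-- Condition (W_λ). -/
def condW (n : ℕ) (α p q₁ q₂ lam : ℝ) (σ : Measure (Rn n)) : Prop :=
  ∀ᵐ x ∂(volume : Measure (Rn n)),
    (wolff n α p (σ.withDensity fun y => (wolff n α p σ y) ^ (gamma2 p q₁ q₂ * q₁)) x
      ≤ ENNReal.ofReal lam *
        (wolff n α p σ x + (wolff n α p σ x) ^ gamma1 p q₁ q₂)) ∧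
    (wolff n α p (σ.withDensity fun y => (wolff n α p σ y) ^ (gamma1 p q₁ q₂ * q₂)) x
      ≤ ENNReal.ofReal lam *
        (wolff n α p σ x + (wolff n α p σ x) ^ gamma2 p q₁ q₂)) ∧
    (wolff n α p σ x + (wolff n α p σ x) ^ gamma1 p q₁ q₂ < ∞) ∧
    (wolff n α p σ x + (wolff n α p σ x) ^ gamma2 p q₁ q₂ < ∞)

lemma ofReal_rpow' {x p : ℝ} (hx : 0 ≤ x) (hp : 0 ≤ p) :
    ENNReal.ofReal (x ^ p) = ENNReal.ofReal x ^ p := by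
  rcases eq_or_lt_of_le hx with h0 | h0
  · rcases eq_or_lt_of_le hp with h0p | h0p
    · rw [← h0, ← h0p]; simp
    · rw [← h0]; simp [Real.zero_rpow (ne_of_gt h0p), ENNReal.zero_rpow_of_pos h0p]
  · exact (ENNReal.ofReal_rpow_of_pos h0).symm

/-- weighted AM-GM in `ℝ≥0∞` for finite inputs. -/
lemma engm {x y : ℝ≥0∞} {l : ℝ} (hx : x ≠ ∞) (hy : y ≠ ∞) (hl : 0 ≤ l) (hl' : l ≤ 1) :
    x ^ l * y ^ (1 - l) ≤ ENNReal.ofReal l * x + ENNReal.ofReal (1 - l) * y := by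
  have hxr : x = ENNReal.ofReal x.toReal := (ENNReal.ofReal_toReal hx).symm
  have hyr : y = ENNReal.ofReal y.toReal := (ENNReal.ofReal_toReal hy).symm
  have h := Real.geom_mean_le_arith_mean2_weighted (w₁ := l) (w₂ := 1 - l)
    (p₁ := x.toReal) (p₂ := y.toReal) hl (by linarith) x.toReal_nonneg
    y.toReal_nonneg (by ring)
  calc x ^ l * y ^ (1 - l)
      = ENNReal.ofReal (x.toReal ^ l * y.toReal ^ (1 - l)) := by
        rw [ENNReal.ofReal_mul (Real.rpow_nonneg x.toReal_nonneg _),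
          ofReal_rpow' x.toReal_nonneg hl, ofReal_rpow' y.toReal_nonneg (by linarith),
          ← hxr, ← hyr]
    _ ≤ ENNReal.ofReal (l * x.toReal + (1 - l) * y.toReal) := ENNReal.ofReal_le_ofReal h
    _ ≤ ENNReal.ofReal l * x + ENNReal.ofReal (1 - l) * y := by
        rw [ENNReal.ofReal_add (mul_nonneg hl x.toReal_nonneg)
          (mul_nonneg (by linarith) y.toReal_nonneg),
          ENNReal.ofReal_mul hl, ENNReal.ofReal_mul (by linarith)]
        rw [← hxr, ← hyr]

/-- `t^κ ≤ κ t + (1-κ)` in `ℝ≥0∞`, any `t`. -/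
lemma enconc {t : ℝ≥0∞} {k : ℝ} (hk : 0 < k) (hk' : k ≤ 1) :
    t ^ k ≤ ENNReal.ofReal k * t + ENNReal.ofReal (1 - k) := by
  rcases eq_or_ne t ∞ with rfl | ht
  · have : ENNReal.ofReal k * ∞ = ∞ := by
      simp [ENNReal.mul_top, ne_of_gt (ENNReal.ofReal_pos.2 hk)]
    simp [this]
  · have := engm (x := t) (y := 1) ht (by simp) hk.le hk'
    simpa using this

/-- concavity increment bound: if `X + D ≤ A < ∞`, `0 < κ ≤ 1` then
`X^κ + κ A^(κ-1) D ≤ A^κ`. -/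
lemma enconc_step {A X D : ℝ≥0∞} {k : ℝ} (hk : 0 < k) (hk' : k ≤ 1)
    (hA : A ≠ ∞) (h : X + D ≤ A) : X ^ k + ENNReal.ofReal k * A ^ (k - 1) * D ≤ A ^ k := by
  rcases eq_or_ne A 0 with rfl | hA0
  · have hX : X = 0 := by simpa using (le_zero_iff.1 (le_trans le_self_add h))
    have hD : D = 0 := by simpa using (le_zero_iff.1 (le_trans le_add_self h))
    simp [hX, hD, ENNReal.zero_rpow_of_pos hk]
  · have hXA : X ≤ A := le_trans le_self_add h
    have hAk : A ^ k = A ^ (k - 1) * A := by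
      have h0 := ENNReal.rpow_add (k - 1) 1 hA0 hA
      simp only [ENNReal.rpow_one, sub_add_cancel] at h0
      exact h0
    have key : X ^ k ≤ ENNReal.ofReal k * A ^ (k - 1) * X + ENNReal.ofReal (1 - k) * A ^ k := by
      have h1 : X ^ k = (X / A) ^ k * A ^ k := by
        rw [← ENNReal.mul_rpow_of_nonneg _ _ hk.le, ENNReal.div_mul_cancel hA0 hA]
      have h2 : (X / A) ^ k ≤ ENNReal.ofReal k * (X / A) + ENNReal.ofReal (1 - k) :=
        enconc hk hk'
      calc X ^ k = (X / A) ^ k * A ^ k := h1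
        _ ≤ (ENNReal.ofReal k * (X / A) + ENNReal.ofReal (1 - k)) * A ^ k :=
            mul_le_mul_left h2 _
        _ = ENNReal.ofReal k * ((X / A) * A ^ k) + ENNReal.ofReal (1 - k) * A ^ k := by ring
        _ = ENNReal.ofReal k * A ^ (k - 1) * X + ENNReal.ofReal (1 - k) * A ^ k := by
            congr 1
            rw [mul_assoc]
            congr 1
            calc (X / A) * A ^ k = X * (A⁻¹ * A) * A ^ (k - 1) := by
                  rw [hAk, div_eq_mul_inv]; ring
              _ = A ^ (k - 1) * X := by rw [ENNReal.inv_mul_cancel hA0 hA]; ring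
    calc X ^ k + ENNReal.ofReal k * A ^ (k - 1) * D
        ≤ ENNReal.ofReal k * A ^ (k - 1) * X + ENNReal.ofReal (1 - k) * A ^ k
            + ENNReal.ofReal k * A ^ (k - 1) * D := add_le_add_left key _
      _ = ENNReal.ofReal k * A ^ (k - 1) * (X + D) + ENNReal.ofReal (1 - k) * A ^ k := by ring
      _ ≤ ENNReal.ofReal k * A ^ (k - 1) * A + ENNReal.ofReal (1 - k) * A ^ k :=
          add_le_add_left (mul_le_mul_right h _) _
      _ = (ENNReal.ofReal k + ENNReal.ofReal (1 - k)) * A ^ k := by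
          rw [mul_assoc, ← hAk]; ring
      _ = A ^ k := by
          rw [← ENNReal.ofReal_add hk.le (by linarith)]; simp

lemma iUnion_right (t : ℝ) : (⋃ k : ℕ, Ioi (t + ((k:ℝ) + 1)⁻¹)) = Ioi t := by
  ext x
  simp only [mem_iUnion, mem_Ioi]
  constructor
  · rintro ⟨k, hk⟩
    have : (0:ℝ) < ((k:ℝ)+1)⁻¹ := by positivity
    linarith
  · intro hx
    obtain ⟨k, hk⟩ := exists_nat_one_div_lt (by linarith : 0 < x - t)
    exact ⟨k, by rw [one_div] at hk; linarith⟩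

lemma iInter_left (t : ℝ) : (⋂ k : ℕ, Ioi (t - ((k:ℝ) + 1)⁻¹)) = Ici t := by
  ext x
  simp only [mem_iInter, mem_Ioi, mem_Ici]
  constructor
  · intro h
    by_contra hx
    push_neg at hx
    obtain ⟨k, hk⟩ := exists_nat_one_div_lt (by linarith : 0 < t - x)
    rw [one_div] at hk
    have := h k
    linarith
  · intro h k
    have : (0:ℝ) < ((k:ℝ)+1)⁻¹ := by positivity
    linarith

/-- right continuity of `t ↦ ρ (Ioi t)`. -/
lemma Ioi_rc (ρ : Measure ℝ) (t : ℝ) :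
    ρ (Ioi t) = ⨆ k : ℕ, ρ (Ioi (t + ((k:ℝ) + 1)⁻¹)) := by
  rw [← iUnion_right t]
  apply Directed.measure_iUnion
  intro i j
  rcases le_total i j with h | h
  · exact ⟨j, fun x hx => by
      simp only [mem_Ioi] at *
      have : ((j:ℝ)+1)⁻¹ ≤ ((i:ℝ)+1)⁻¹ := by
        apply inv_anti₀ (by positivity); exact_mod_cast by linarith
      linarith, fun x hx => hx⟩
  · exact ⟨i, fun x hx => hx, fun x hx => by
      simp only [mem_Ioi] at *
      have : ((i:ℝ)+1)⁻¹ ≤ ((j:ℝ)+1)⁻¹ := by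
        apply inv_anti₀ (by positivity); exact_mod_cast by linarith
      linarith⟩

lemma Ioi_split (ρ : Measure ℝ) {s t : ℝ} (h : s ≤ t) :
    ρ (Ioi s) = ρ (Ioc s t) + ρ (Ioi t) := by
  rw [← Set.Ioc_union_Ioi_eq_Ioi h]
  exact measure_union (Set.Ioc_disjoint_Ioi le_rfl) measurableSet_Ioi

/-- the halving point. -/
lemma halving (ρ : Measure ℝ) (hatom : ∀ r : ℝ, ρ {r} = 0) {s : ℝ}
    (h0 : ρ (Ioi s) ≠ 0) (hfin : ρ (Ioi s) ≠ ∞) :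
    ∃ r, s < r ∧ ρ (Ioi r) = ρ (Ioi s) / 2 := by
  set W : ℝ → ℝ≥0∞ := fun t => ρ (Ioi t) with hW
  have Wanti : ∀ ⦃a b : ℝ⦄, a ≤ b → W b ≤ W a := fun a b hab =>
    measure_mono (fun x hx => lt_of_le_of_lt hab hx)
  have hhalfpos : 0 < W s / 2 := ENNReal.div_pos h0 (by norm_num)
  have hhalflt : W s / 2 < W s := ENNReal.half_lt_self h0 hfin
  -- the target set
  set A : Set ℝ := {r | s < r ∧ W r ≤ W s / 2} with hA
  have hAne : A.Nonempty := by
    have hint : (⋂ k : ℕ, Ioi (s + ((k:ℝ) + 1))) = ∅ := by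
      ext x
      simp only [mem_iInter, mem_Ioi, mem_empty_iff_false, iff_false, not_forall, not_lt]
      obtain ⟨k, hk⟩ := exists_nat_gt (x - s)
      exact ⟨k, by push_cast; linarith⟩
    have hinf : (⨅ k : ℕ, ρ (Ioi (s + ((k:ℝ) + 1)))) = 0 := by
      have := Antitone.measure_iInter (μ := ρ) (s := fun k : ℕ => Ioi (s + ((k:ℝ) + 1)))
      rw [hint] at this
      rw [← this]
      · simp
      · intro i j hij
        apply Set.Ioi_subset_Ioi
        have : (i:ℝ) ≤ j := by exact_mod_cast hij
        linarith
      · exact fun i => measurableSet_Ioi.nullMeasurableSet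
      · exact ⟨0, by
          refine ne_top_of_le_ne_top hfin (measure_mono ?_)
          apply Set.Ioi_subset_Ioi; linarith⟩
    have : (⨅ k : ℕ, ρ (Ioi (s + ((k:ℝ) + 1)))) < W s / 2 := by
      rw [hinf]; exact hhalfpos
    obtain ⟨k, hk⟩ := iInf_lt_iff.1 this
    refine ⟨s + ((k:ℝ) + 1), ?_, hk.le⟩
    linarith
  have hAbdd : BddBelow A := ⟨s, fun a ha => (ha.1).le⟩
  set r : ℝ := sInf A with hr
  have hrs : s ≤ r := le_csInf hAne (fun a ha => ha.1.le)
  have claimU : ∀ t, r < t → W t ≤ W s / 2 := by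
    intro t ht
    obtain ⟨a, haA, hat⟩ := (csInf_lt_iff hAbdd hAne).1 ht
    exact le_trans (Wanti hat.le) haA.2
  have claim1 : W r ≤ W s / 2 := by
    show ρ (Ioi r) ≤ W s / 2
    rw [Ioi_rc ρ r]
    apply iSup_le
    intro k
    apply claimU
    have : (0:ℝ) < ((k:ℝ)+1)⁻¹ := by positivity
    linarith
  have hsr : s < r := by
    rcases eq_or_lt_of_le hrs with h | h
    · exfalso
      rw [← h] at claim1
      exact absurd (lt_of_le_of_lt claim1 hhalflt) (lt_irrefl _)
    · exact h
  have claim3 : W s / 2 ≤ W r := by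
    have lowB : ∀ k : ℕ, W s / 2 ≤ W (r - ((k:ℝ) + 1)⁻¹) := by
      intro k
      set b := r - ((k:ℝ)+1)⁻¹ with hb
      have hbr : b < r := by
        have : (0:ℝ) < ((k:ℝ)+1)⁻¹ := by positivity
        simp only [hb]; linarith
      rcases le_or_gt b s with hbs | hbs
      · exact le_trans (le_trans hhalflt.le (Wanti (le_refl s))) (Wanti hbs)
      · have hbnA : b ∉ A := fun hmem => absurd (csInf_le hAbdd hmem) (not_le.2 hbr)
        have : ¬ (W b ≤ W s / 2) := fun hle => hbnA ⟨hbs, hle⟩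
        exact (not_le.1 this).le
    have hIci : W s / 2 ≤ ρ (Ici r) := by
      rw [← iInter_left r]
      rw [Antitone.measure_iInter]
      · exact le_iInf lowB
      · intro i j hij
        apply Set.Ioi_subset_Ioi
        have h1 : ((j:ℝ)+1)⁻¹ ≤ ((i:ℝ)+1)⁻¹ := by
          apply inv_anti₀ (by positivity)
          exact_mod_cast by linarith
        linarith
      · exact fun i => measurableSet_Ioi.nullMeasurableSet
      · obtain ⟨k, hk⟩ := exists_nat_one_div_lt (by linarith : 0 < r - s)
        rw [one_div] at hk
        refine ⟨k, ne_top_of_le_ne_top hfin (measure_mono ?_)⟩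
        apply Set.Ioi_subset_Ioi; linarith
    calc W s / 2 ≤ ρ (Ici r) := hIci
      _ ≤ ρ ({r} ∪ Ioi r) := measure_mono (by
          intro x hx
          rcases eq_or_lt_of_le (mem_Ici.1 hx) with h | h
          · exact Or.inl (by simp [← h])
          · exact Or.inr h)
      _ ≤ ρ {r} + ρ (Ioi r) := measure_union_le _ _
      _ = W r := by rw [hatom r, zero_add]
  exact ⟨r, hsr, le_antisymm claim1 claim3⟩

lemma antitone_measure_Ioi (ν : Measure ℝ) : Antitone (fun r : ℝ => ν (Ioi r)) :=
  fun _ _ hab => measure_mono (Set.Ioi_subset_Ioi hab)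

section Core

variable {μW ν₁ ν₂ : Measure ℝ} {θ₁ θ₂ cA γ₁ γ₂ lam : ℝ}

/-- the single step of the continuous induction. -/
lemma coreStep
    (ht1 : 0 < θ₁) (ht1' : θ₁ < 1) (ht2 : 0 < θ₂) (ht2' : θ₂ < 1) (hcA : 0 < cA)
    (hγ₁ : 1 < γ₁) (hγ₂ : 1 < γ₂)
    (hlam : 0 < lam) (hlam' : lam < 1)
    (E1 : lam * (1 - 1/γ₁) = (1 - lam) * θ₂)
    (E2 : (1 - lam) * (1 - 1/γ₂) = lam * θ₁)
    (H1 : ∀ s t : ℝ, 0 < s → s ≤ t →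
      ENNReal.ofReal cA * ∫⁻ r in Ioc s t, (ν₂ (Ioi r)) ^ θ₁ ∂μW ≤ ν₁ (Ioc s t))
    (H2 : ∀ s t : ℝ, 0 < s → s ≤ t →
      ENNReal.ofReal cA * ∫⁻ r in Ioc s t, (ν₁ (Ioi r)) ^ θ₂ ∂μW ≤ ν₂ (Ioc s t))
    {T t : ℝ} (hT : 0 < T) (hTt : T ≤ t)
    (hf1 : ν₁ (Ioi T) ≠ ∞) (hf2 : ν₂ (Ioi T) ≠ ∞)
    (hp1 : ν₁ (Ioi T) ≠ 0) (hp2 : ν₂ (Ioi T) ≠ 0)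
    (hh1 : ν₁ (Ioi T) ≤ 2 * ν₁ (Ioi t)) (hh2 : ν₂ (Ioi T) ≤ 2 * ν₂ (Ioi t)) :
    (ν₁ (Ioi t)) ^ (1/γ₁) + (ν₂ (Ioi t)) ^ (1/γ₂)
      + ENNReal.ofReal (cA / 4 * min (1/γ₁) (1/γ₂)) * μW (Ioc T t)
      ≤ (ν₁ (Ioi T)) ^ (1/γ₁) + (ν₂ (Ioi T)) ^ (1/γ₂) := by
  set X := ν₁ (Ioi T) with hX
  set Y := ν₂ (Ioi T) with hY
  have hk1 : 0 < 1/γ₁ := by positivity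
  have hk1' : 1/γ₁ ≤ 1 := by
    rw [div_le_one (by linarith)]; linarith
  have hk2 : 0 < 1/γ₂ := by positivity
  have hk2' : 1/γ₂ ≤ 1 := by
    rw [div_le_one (by linarith)]; linarith
  -- increments
  have inc1 : ν₁ (Ioi t) + ENNReal.ofReal cA * (Y / 2) ^ θ₁ * μW (Ioc T t) ≤ X := by
    rw [hX, Ioi_split ν₁ hTt, add_comm (ν₁ (Ioc T t))]
    apply add_le_add_right
    refine le_trans ?_ (H1 T t hT hTt)
    rw [mul_assoc]
    apply mul_le_mul_right
    rw [← MeasureTheory.setLIntegral_const (Ioc T t) ((Y/2) ^ θ₁)]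
    apply MeasureTheory.setLIntegral_mono
    · exact ((antitone_measure_Ioi ν₂).measurable.pow measurable_const)
    · intro r hr
      apply ENNReal.rpow_le_rpow _ ht1.le
      · calc Y / 2 ≤ 2 * ν₂ (Ioi t) / 2 := by
              apply ENNReal.div_le_div_right hh2
          _ = ν₂ (Ioi t) := by
              rw [mul_comm, mul_div_assoc, ENNReal.div_self (by norm_num) (by norm_num), mul_one]
          _ ≤ ν₂ (Ioi r) := measure_mono (fun x hx => lt_of_le_of_lt hr.2 hx)
  have inc2 : ν₂ (Ioi t) + ENNReal.ofReal cA * (X / 2) ^ θ₂ * μW (Ioc T t) ≤ Y := by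
    rw [hY, Ioi_split ν₂ hTt, add_comm (ν₂ (Ioc T t))]
    apply add_le_add_right
    refine le_trans ?_ (H2 T t hT hTt)
    rw [mul_assoc]
    apply mul_le_mul_right
    rw [← MeasureTheory.setLIntegral_const (Ioc T t) ((X/2) ^ θ₂)]
    apply MeasureTheory.setLIntegral_mono
    · exact ((antitone_measure_Ioi ν₁).measurable.pow measurable_const)
    · intro r hr
      apply ENNReal.rpow_le_rpow _ ht2.le
      · calc X / 2 ≤ 2 * ν₁ (Ioi t) / 2 := by
              apply ENNReal.div_le_div_right hh1
          _ = ν₁ (Ioi t) := by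
              rw [mul_comm, mul_div_assoc, ENNReal.div_self (by norm_num) (by norm_num), mul_one]
          _ ≤ ν₁ (Ioi r) := measure_mono (fun x hx => lt_of_le_of_lt hr.2 hx)
  -- concavity
  have conc1 := enconc_step hk1 hk1' hf1 inc1
  have conc2 := enconc_step hk2 hk2' hf2 inc2
  -- the AM-GM cancellation
  have key : ENNReal.ofReal (cA / 4 * min (1/γ₁) (1/γ₂)) * μW (Ioc T t) ≤
      ENNReal.ofReal (1/γ₁) * X ^ (1/γ₁ - 1) * (ENNReal.ofReal cA * (Y / 2) ^ θ₁ * μW (Ioc T t))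
      + ENNReal.ofReal (1/γ₂) * Y ^ (1/γ₂ - 1) * (ENNReal.ofReal cA * (X / 2) ^ θ₂ * μW (Ioc T t)) := by
    set t₁ : ℝ≥0∞ := X ^ (1/γ₁ - 1) * Y ^ θ₁ with ht₁def
    set t₂ : ℝ≥0∞ := Y ^ (1/γ₂ - 1) * X ^ θ₂ with ht₂def
    have ht₁fin : t₁ ≠ ∞ := by
      apply ENNReal.mul_ne_top
      · simp only [ne_eq, ENNReal.rpow_eq_top_iff, not_or, not_and, not_lt]
        exact ⟨fun h => absurd h hp1, fun h => absurd h hf1⟩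
      · exact (ENNReal.rpow_ne_top_of_nonneg ht1.le hf2)
    have ht₂fin : t₂ ≠ ∞ := by
      apply ENNReal.mul_ne_top
      · simp only [ne_eq, ENNReal.rpow_eq_top_iff, not_or, not_and, not_lt]
        exact ⟨fun h => absurd h hp2, fun h => absurd h hf2⟩
      · exact (ENNReal.rpow_ne_top_of_nonneg ht2.le hf1)
    have hone : (1:ℝ≥0∞) = t₁ ^ lam * t₂ ^ (1 - lam) := by
      rw [ht₁def, ht₂def,
        ENNReal.mul_rpow_of_nonneg _ _ hlam.le,
        ENNReal.mul_rpow_of_nonneg _ _ (by linarith : (0:ℝ) ≤ 1 - lam),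
        ← ENNReal.rpow_mul X, ← ENNReal.rpow_mul Y, ← ENNReal.rpow_mul Y, ← ENNReal.rpow_mul X]
      have swap : X ^ ((1/γ₁ - 1) * lam) * Y ^ (θ₁ * lam) * (Y ^ ((1/γ₂ - 1) * (1 - lam)) * X ^ (θ₂ * (1 - lam)))
          = (X ^ ((1/γ₁ - 1) * lam) * X ^ (θ₂ * (1 - lam))) * (Y ^ (θ₁ * lam) * Y ^ ((1/γ₂ - 1) * (1 - lam))) := by
        ring
      rw [swap, ← ENNReal.rpow_add _ _ hp1 hf1, ← ENNReal.rpow_add _ _ hp2 hf2]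
      have e1 : (1/γ₁ - 1) * lam + θ₂ * (1 - lam) = 0 := by nlinarith [E1]
      have e2 : θ₁ * lam + (1/γ₂ - 1) * (1 - lam) = 0 := by nlinarith [E2]
      rw [e1, e2, ENNReal.rpow_zero, ENNReal.rpow_zero, one_mul]
    have hgm : (1:ℝ≥0∞) ≤ ENNReal.ofReal lam * t₁ + ENNReal.ofReal (1 - lam) * t₂ := by
      rw [hone]
      exact engm ht₁fin ht₂fin hlam.le hlam'.le
    -- halving the power
    have hhalfpow : ∀ (Z : ℝ≥0∞) (θ : ℝ), 0 < θ → θ ≤ 1 →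
        ENNReal.ofReal (1/2) * Z ^ θ ≤ (Z / 2) ^ θ := by
      intro Z θ h0 h1
      rw [ENNReal.div_rpow_of_nonneg _ _ h0.le, ENNReal.div_eq_inv_mul, one_div,
        ENNReal.ofReal_inv_of_pos (by norm_num : (0:ℝ) < 2)]
      apply mul_le_mul_left
      rw [ENNReal.inv_le_inv, ENNReal.ofReal_ofNat]
      calc (2:ℝ≥0∞) ^ θ ≤ (2:ℝ≥0∞) ^ (1:ℝ) :=
            ENNReal.rpow_le_rpow_of_exponent_le (by norm_num) h1
        _ = 2 := by rw [ENNReal.rpow_one]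
    have hmin1 : min (1/γ₁) (1/γ₂) ≤ 1/γ₁ := min_le_left _ _
    have hmin2 : min (1/γ₁) (1/γ₂) ≤ 1/γ₂ := min_le_right _ _
    have hminpos : 0 < min (1/γ₁) (1/γ₂) := lt_min (by positivity) (by positivity)
    have hb1 : ENNReal.ofReal (cA / 2 * min (1/γ₁) (1/γ₂)) * (ENNReal.ofReal lam * t₁)
        ≤ ENNReal.ofReal (1/γ₁) * X ^ (1/γ₁ - 1) * (ENNReal.ofReal cA * (Y / 2) ^ θ₁) := by
      calc ENNReal.ofReal (cA / 2 * min (1/γ₁) (1/γ₂)) * (ENNReal.ofReal lam * t₁)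
          ≤ ENNReal.ofReal (cA / 2 * (1/γ₁)) * (1 * t₁) := by
            gcongr ?_ * (?_ * t₁)
            · exact ENNReal.ofReal_le_ofReal (by nlinarith)
            · exact ENNReal.ofReal_le_one.2 hlam'.le
        _ = ENNReal.ofReal (1/γ₁) * X ^ (1/γ₁ - 1) * (ENNReal.ofReal cA * (ENNReal.ofReal (1/2) * Y ^ θ₁)) := by
            rw [one_mul, ht₁def, show cA / 2 * (1/γ₁) = (1/γ₁) * (cA * (1/2)) by ring,
              ENNReal.ofReal_mul (by positivity), ENNReal.ofReal_mul (by positivity)]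
            ring
        _ ≤ ENNReal.ofReal (1/γ₁) * X ^ (1/γ₁ - 1) * (ENNReal.ofReal cA * (Y / 2) ^ θ₁) := by
            gcongr
            exact hhalfpow Y θ₁ ht1 ht1'.le
    have hb2 : ENNReal.ofReal (cA / 2 * min (1/γ₁) (1/γ₂)) * (ENNReal.ofReal (1 - lam) * t₂)
        ≤ ENNReal.ofReal (1/γ₂) * Y ^ (1/γ₂ - 1) * (ENNReal.ofReal cA * (X / 2) ^ θ₂) := by
      calc ENNReal.ofReal (cA / 2 * min (1/γ₁) (1/γ₂)) * (ENNReal.ofReal (1 - lam) * t₂)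
          ≤ ENNReal.ofReal (cA / 2 * (1/γ₂)) * (1 * t₂) := by
            gcongr ?_ * (?_ * t₂)
            · exact ENNReal.ofReal_le_ofReal (by nlinarith)
            · exact ENNReal.ofReal_le_one.2 (by linarith)
        _ = ENNReal.ofReal (1/γ₂) * Y ^ (1/γ₂ - 1) * (ENNReal.ofReal cA * (ENNReal.ofReal (1/2) * X ^ θ₂)) := by
            rw [one_mul, ht₂def, show cA / 2 * (1/γ₂) = (1/γ₂) * (cA * (1/2)) by ring,
              ENNReal.ofReal_mul (by positivity), ENNReal.ofReal_mul (by positivity)]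
            ring
        _ ≤ ENNReal.ofReal (1/γ₂) * Y ^ (1/γ₂ - 1) * (ENNReal.ofReal cA * (X / 2) ^ θ₂) := by
            gcongr
            exact hhalfpow X θ₂ ht2 ht2'.le
    calc ENNReal.ofReal (cA / 4 * min (1/γ₁) (1/γ₂)) * μW (Ioc T t)
        ≤ ENNReal.ofReal (cA / 2 * min (1/γ₁) (1/γ₂)) *
            (ENNReal.ofReal lam * t₁ + ENNReal.ofReal (1 - lam) * t₂) * μW (Ioc T t) := by
          gcongr
          calc ENNReal.ofReal (cA / 4 * min (1/γ₁) (1/γ₂))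
              ≤ ENNReal.ofReal (cA / 2 * min (1/γ₁) (1/γ₂)) * 1 := by
                rw [mul_one]
                exact ENNReal.ofReal_le_ofReal (by nlinarith)
            _ ≤ _ := by exact mul_le_mul_right hgm _
      _ = ENNReal.ofReal (cA / 2 * min (1/γ₁) (1/γ₂)) * (ENNReal.ofReal lam * t₁) * μW (Ioc T t)
          + ENNReal.ofReal (cA / 2 * min (1/γ₁) (1/γ₂)) * (ENNReal.ofReal (1 - lam) * t₂) * μW (Ioc T t) := by
          ring
      _ ≤ ENNReal.ofReal (1/γ₁) * X ^ (1/γ₁ - 1) * (ENNReal.ofReal cA * (Y / 2) ^ θ₁) * μW (Ioc T t)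
          + ENNReal.ofReal (1/γ₂) * Y ^ (1/γ₂ - 1) * (ENNReal.ofReal cA * (X / 2) ^ θ₂) * μW (Ioc T t) := by
          gcongr
      _ = ENNReal.ofReal (1/γ₁) * X ^ (1/γ₁ - 1) * (ENNReal.ofReal cA * (Y / 2) ^ θ₁ * μW (Ioc T t))
          + ENNReal.ofReal (1/γ₂) * Y ^ (1/γ₂ - 1) * (ENNReal.ofReal cA * (X / 2) ^ θ₂ * μW (Ioc T t)) := by
          ring
  calc (ν₁ (Ioi t)) ^ (1/γ₁) + (ν₂ (Ioi t)) ^ (1/γ₂)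
        + ENNReal.ofReal (cA / 4 * min (1/γ₁) (1/γ₂)) * μW (Ioc T t)
      ≤ (ν₁ (Ioi t)) ^ (1/γ₁) + (ν₂ (Ioi t)) ^ (1/γ₂)
        + (ENNReal.ofReal (1/γ₁) * X ^ (1/γ₁ - 1) * (ENNReal.ofReal cA * (Y / 2) ^ θ₁ * μW (Ioc T t))
          + ENNReal.ofReal (1/γ₂) * Y ^ (1/γ₂ - 1) * (ENNReal.ofReal cA * (X / 2) ^ θ₂ * μW (Ioc T t))) :=
        add_le_add_right key _
    _ = ((ν₁ (Ioi t)) ^ (1/γ₁) + ENNReal.ofReal (1/γ₁) * X ^ (1/γ₁ - 1) * (ENNReal.ofReal cA * (Y / 2) ^ θ₁ * μW (Ioc T t)))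
        + ((ν₂ (Ioi t)) ^ (1/γ₂) + ENNReal.ofReal (1/γ₂) * Y ^ (1/γ₂ - 1) * (ENNReal.ofReal cA * (X / 2) ^ θ₂ * μW (Ioc T t))) := by
        ring
    _ ≤ X ^ (1/γ₁) + Y ^ (1/γ₂) := add_le_add conc1 conc2

lemma Ioc_sup (ρ : Measure ℝ) (s : ℝ) :
    ρ (Ioi s) = ⨆ k : ℕ, ρ (Ioc s (s + (k:ℝ) + 1)) := by
  have hU : (⋃ k : ℕ, Ioc s (s + (k:ℝ) + 1)) = Ioi s := by
    ext x
    simp only [mem_iUnion, mem_Ioc, mem_Ioi]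
    constructor
    · rintro ⟨k, hk, -⟩; exact hk
    · intro hx
      obtain ⟨k, hk⟩ := exists_nat_gt (x - s)
      exact ⟨k, hx, by linarith⟩
  rw [← hU]
  apply Directed.measure_iUnion
  intro i j
  rcases le_total i j with h | h
  · exact ⟨j, fun x hx => ⟨hx.1, le_trans hx.2 (by
      have : (i:ℝ) ≤ j := by exact_mod_cast h
      linarith)⟩, fun x hx => hx⟩
  · exact ⟨i, fun x hx => hx, fun x hx => ⟨hx.1, le_trans hx.2 (by
      have : (j:ℝ) ≤ i := by exact_mod_cast h
      linarith)⟩⟩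

/-- the continuous induction. -/
lemma coreGood
    (ht1 : 0 < θ₁) (ht1' : θ₁ < 1) (ht2 : 0 < θ₂) (ht2' : θ₂ < 1) (hcA : 0 < cA)
    (hγ₁ : 1 < γ₁) (hγ₂ : 1 < γ₂)
    (hlam : 0 < lam) (hlam' : lam < 1)
    (E1 : lam * (1 - 1/γ₁) = (1 - lam) * θ₂)
    (E2 : (1 - lam) * (1 - 1/γ₂) = lam * θ₁)
    (hatom : ∀ r : ℝ, μW {r} = 0)
    (hpos1 : ∀ t : ℝ, 0 < t → ν₁ (Ioi t) ≠ 0) (hpos2 : ∀ t : ℝ, 0 < t → ν₂ (Ioi t) ≠ 0)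
    (H1 : ∀ s t : ℝ, 0 < s → s ≤ t →
      ENNReal.ofReal cA * ∫⁻ r in Ioc s t, (ν₂ (Ioi r)) ^ θ₁ ∂μW ≤ ν₁ (Ioc s t))
    (H2 : ∀ s t : ℝ, 0 < s → s ≤ t →
      ENNReal.ofReal cA * ∫⁻ r in Ioc s t, (ν₁ (Ioi r)) ^ θ₂ ∂μW ≤ ν₂ (Ioc s t))
    {s : ℝ} (hs : 0 < s) (hf1 : ν₁ (Ioi s) ≠ ∞) (hf2 : ν₂ (Ioi s) ≠ ∞)
    {t : ℝ} (hst : s ≤ t) :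
    (ν₁ (Ioi t)) ^ (1/γ₁) + (ν₂ (Ioi t)) ^ (1/γ₂)
      + ENNReal.ofReal (cA / 4 * min (1/γ₁) (1/γ₂)) * μW (Ioc s t)
      ≤ (ν₁ (Ioi s)) ^ (1/γ₁) + (ν₂ (Ioi s)) ^ (1/γ₂) := by
  set cS : ℝ := cA / 4 * min (1/γ₁) (1/γ₂) with hcS
  set ψ : ℝ → ℝ≥0∞ := fun r => (ν₁ (Ioi r)) ^ (1/γ₁) + (ν₂ (Ioi r)) ^ (1/γ₂) with hψ
  have hψanti : ∀ ⦃a b : ℝ⦄, a ≤ b → ψ b ≤ ψ a := by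
    intro a b hab
    apply add_le_add
    · exact ENNReal.rpow_le_rpow (antitone_measure_Ioi ν₁ hab) (by positivity)
    · exact ENNReal.rpow_le_rpow (antitone_measure_Ioi ν₂ hab) (by positivity)
  set A : Set ℝ := {T | s ≤ T ∧ T ≤ t ∧ ψ T + ENNReal.ofReal cS * μW (Ioc s T) ≤ ψ s} with hA
  have hsA : s ∈ A := by
    refine ⟨le_refl s, hst, ?_⟩
    rw [Set.Ioc_self, measure_empty, mul_zero, add_zero]
  have hAne : A.Nonempty := ⟨s, hsA⟩
  have hAbdd : BddAbove A := ⟨t, fun a ha => ha.2.1⟩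
  set T : ℝ := sSup A with hT
  have hsT : s ≤ T := le_csSup hAbdd hsA
  have hTt : T ≤ t := csSup_le hAne (fun a ha => ha.2.1)
  have hT0 : 0 < T := lt_of_lt_of_le hs hsT
  -- T ∈ A
  have hTA : ψ T + ENNReal.ofReal cS * μW (Ioc s T) ≤ ψ s := by
    -- approximate from the left
    have happrox : ∀ k : ℕ, ∃ a ∈ A, T - ((k:ℝ)+1)⁻¹ < a := by
      intro k
      have : T - ((k:ℝ)+1)⁻¹ < T := by
        have : (0:ℝ) < ((k:ℝ)+1)⁻¹ := by positivity
        linarith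
      exact exists_lt_of_lt_csSup hAne this
    choose a haA hagt using happrox
    have haT : ∀ k, a k ≤ T := fun k => le_csSup hAbdd (haA k)
    have hcover : Ioc s T ⊆ (⋃ k : ℕ, Ioc s (a k)) ∪ {T} := by
      intro x hx
      rcases eq_or_lt_of_le hx.2 with h | h
      · exact Or.inr (by simp [h])
      · obtain ⟨k, hk⟩ := exists_nat_one_div_lt (by linarith : 0 < T - x)
        rw [one_div] at hk
        exact Or.inl (mem_iUnion.2 ⟨k, hx.1, by
          have := hagt k
          linarith⟩)
    have hsup : μW (Ioc s T) ≤ ⨆ k : ℕ, μW (Ioc s (a k)) := by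
      calc μW (Ioc s T) ≤ μW ((⋃ k : ℕ, Ioc s (a k)) ∪ {T}) := measure_mono hcover
        _ ≤ μW (⋃ k : ℕ, Ioc s (a k)) + μW {T} := measure_union_le _ _
        _ = μW (⋃ k : ℕ, Ioc s (a k)) := by rw [hatom T, add_zero]
        _ ≤ ⨆ k : ℕ, μW (Ioc s (a k)) := by
            rw [Directed.measure_iUnion]
            intro i j
            rcases le_total (a i) (a j) with h | h
            · exact ⟨j, Set.Ioc_subset_Ioc_right h, fun x hx => hx⟩
            · exact ⟨i, fun x hx => hx, Set.Ioc_subset_Ioc_right h⟩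
    calc ψ T + ENNReal.ofReal cS * μW (Ioc s T)
        ≤ ψ T + ENNReal.ofReal cS * ⨆ k : ℕ, μW (Ioc s (a k)) := by
          exact add_le_add_right (mul_le_mul_right hsup _) _
      _ = ⨆ k : ℕ, (ψ T + ENNReal.ofReal cS * μW (Ioc s (a k))) := by
          rw [ENNReal.mul_iSup, ENNReal.add_iSup]
      _ ≤ ψ s := by
          apply iSup_le
          intro k
          calc ψ T + ENNReal.ofReal cS * μW (Ioc s (a k))
              ≤ ψ (a k) + ENNReal.ofReal cS * μW (Ioc s (a k)) :=
                add_le_add_left (hψanti (haT k)) _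
            _ ≤ ψ s := (haA k).2.2
  -- if T < t, we can extend, contradiction
  rcases eq_or_lt_of_le hTt with hTeq | hTlt
  · rw [← hTeq]; exact hTA
  · exfalso
    have hf1T : ν₁ (Ioi T) ≠ ∞ := fun h =>
      hf1 (top_le_iff.1 (h ▸ antitone_measure_Ioi ν₁ hsT))
    have hf2T : ν₂ (Ioi T) ≠ ∞ := fun h =>
      hf2 (top_le_iff.1 (h ▸ antitone_measure_Ioi ν₂ hsT))
    -- find t₀ ∈ (T, t] where both ν's are at least half
    have hrc1 : ν₁ (Ioi T) = ⨆ k : ℕ, ν₁ (Ioi (T + ((k:ℝ) + 1)⁻¹)) := Ioi_rc ν₁ T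
    have hrc2 : ν₂ (Ioi T) = ⨆ k : ℕ, ν₂ (Ioi (T + ((k:ℝ) + 1)⁻¹)) := Ioi_rc ν₂ T
    have hhalf1 : ν₁ (Ioi T) / 2 < ν₁ (Ioi T) :=
      ENNReal.half_lt_self (hpos1 T hT0) hf1T
    have hhalf2 : ν₂ (Ioi T) / 2 < ν₂ (Ioi T) :=
      ENNReal.half_lt_self (hpos2 T hT0) hf2T
    obtain ⟨k₁, hk₁⟩ := lt_iSup_iff.1 (hrc1 ▸ hhalf1 : ν₁ (Ioi T) / 2 < ⨆ k : ℕ, ν₁ (Ioi (T + ((k:ℝ) + 1)⁻¹)))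
    obtain ⟨k₂, hk₂⟩ := lt_iSup_iff.1 (hrc2 ▸ hhalf2 : ν₂ (Ioi T) / 2 < ⨆ k : ℕ, ν₂ (Ioi (T + ((k:ℝ) + 1)⁻¹)))
    set t₀ : ℝ := min (T + min ((k₁:ℝ)+1)⁻¹ ((k₂:ℝ)+1)⁻¹) t with ht₀
    have hTt₀ : T < t₀ := by
      apply lt_min _ hTlt
      have h1 : (0:ℝ) < ((k₁:ℝ)+1)⁻¹ := by positivity
      have h2 : (0:ℝ) < ((k₂:ℝ)+1)⁻¹ := by positivity
      have := lt_min h1 h2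
      linarith
    have ht₀t : t₀ ≤ t := min_le_right _ _
    have ht₀1 : t₀ ≤ T + ((k₁:ℝ)+1)⁻¹ := le_trans (min_le_left _ _) (by
      have := min_le_left ((k₁:ℝ)+1)⁻¹ ((k₂:ℝ)+1)⁻¹
      linarith)
    have ht₀2 : t₀ ≤ T + ((k₂:ℝ)+1)⁻¹ := le_trans (min_le_left _ _) (by
      have := min_le_right ((k₁:ℝ)+1)⁻¹ ((k₂:ℝ)+1)⁻¹
      linarith)
    have hh1 : ν₁ (Ioi T) ≤ 2 * ν₁ (Ioi t₀) := by
      have h2' : ν₁ (Ioi T) / 2 < ν₁ (Ioi t₀) :=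
        lt_of_lt_of_le hk₁ (antitone_measure_Ioi ν₁ ht₀1)
      calc ν₁ (Ioi T) = ν₁ (Ioi T) / 2 + ν₁ (Ioi T) / 2 := (ENNReal.add_halves _).symm
        _ ≤ ν₁ (Ioi t₀) + ν₁ (Ioi t₀) := add_le_add h2'.le h2'.le
        _ = 2 * ν₁ (Ioi t₀) := (two_mul _).symm
    have hh2 : ν₂ (Ioi T) ≤ 2 * ν₂ (Ioi t₀) := by
      have h2' : ν₂ (Ioi T) / 2 < ν₂ (Ioi t₀) :=
        lt_of_lt_of_le hk₂ (antitone_measure_Ioi ν₂ ht₀2)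
      calc ν₂ (Ioi T) = ν₂ (Ioi T) / 2 + ν₂ (Ioi T) / 2 := (ENNReal.add_halves _).symm
        _ ≤ ν₂ (Ioi t₀) + ν₂ (Ioi t₀) := add_le_add h2'.le h2'.le
        _ = 2 * ν₂ (Ioi t₀) := (two_mul _).symm
    have hstep := coreStep ht1 ht1' ht2 ht2' hcA hγ₁ hγ₂ hlam hlam' E1 E2 H1 H2
      hT0 hTt₀.le hf1T hf2T (hpos1 T hT0) (hpos2 T hT0) hh1 hh2
    -- t₀ ∈ A
    have ht₀A : t₀ ∈ A := by
      refine ⟨le_trans hsT hTt₀.le, ht₀t, ?_⟩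
      calc ψ t₀ + ENNReal.ofReal cS * μW (Ioc s t₀)
          = ψ t₀ + ENNReal.ofReal cS * (μW (Ioc s T) + μW (Ioc T t₀)) := by
            congr 1
            rw [← measure_union ((Set.Ioc_disjoint_Ioc_of_le le_rfl)) measurableSet_Ioc,
              Set.Ioc_union_Ioc_eq_Ioc hsT hTt₀.le]
        _ = (ψ t₀ + ENNReal.ofReal cS * μW (Ioc T t₀)) + ENNReal.ofReal cS * μW (Ioc s T) := by
            ring
        _ ≤ ψ T + ENNReal.ofReal cS * μW (Ioc s T) := add_le_add_left hstep _
        _ ≤ ψ s := hTA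
    exact absurd (le_csSup hAbdd ht₀A) (not_le.2 (hT ▸ hTt₀))

/-- main inequality: `cS · μW(Ioi s) ≤ ψ s`. -/
lemma coreMain
    (ht1 : 0 < θ₁) (ht1' : θ₁ < 1) (ht2 : 0 < θ₂) (ht2' : θ₂ < 1) (hcA : 0 < cA)
    (hγ₁ : 1 < γ₁) (hγ₂ : 1 < γ₂)
    (hlam : 0 < lam) (hlam' : lam < 1)
    (E1 : lam * (1 - 1/γ₁) = (1 - lam) * θ₂)
    (E2 : (1 - lam) * (1 - 1/γ₂) = lam * θ₁)
    (hatom : ∀ r : ℝ, μW {r} = 0)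
    (hpos1 : ∀ t : ℝ, 0 < t → ν₁ (Ioi t) ≠ 0) (hpos2 : ∀ t : ℝ, 0 < t → ν₂ (Ioi t) ≠ 0)
    (H1 : ∀ s t : ℝ, 0 < s → s ≤ t →
      ENNReal.ofReal cA * ∫⁻ r in Ioc s t, (ν₂ (Ioi r)) ^ θ₁ ∂μW ≤ ν₁ (Ioc s t))
    (H2 : ∀ s t : ℝ, 0 < s → s ≤ t →
      ENNReal.ofReal cA * ∫⁻ r in Ioc s t, (ν₁ (Ioi r)) ^ θ₂ ∂μW ≤ ν₂ (Ioc s t))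
    {s : ℝ} (hs : 0 < s) :
    ENNReal.ofReal (cA / 4 * min (1/γ₁) (1/γ₂)) * μW (Ioi s)
      ≤ (ν₁ (Ioi s)) ^ (1/γ₁) + (ν₂ (Ioi s)) ^ (1/γ₂) := by
  rcases eq_or_ne (ν₁ (Ioi s)) ∞ with h1 | h1
  · rw [h1, ENNReal.top_rpow_of_pos (by positivity)]
    simp
  rcases eq_or_ne (ν₂ (Ioi s)) ∞ with h2 | h2
  · rw [h2, ENNReal.top_rpow_of_pos (by positivity)]
    simp
  rw [Ioc_sup μW s, ENNReal.mul_iSup]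
  apply iSup_le
  intro k
  have := coreGood ht1 ht1' ht2 ht2' hcA hγ₁ hγ₂ hlam hlam' E1 E2 hatom hpos1 hpos2
    H1 H2 hs h1 h2 (t := s + (k:ℝ) + 1) (by linarith)
  exact le_trans le_add_self this

/-- separation: lower bound for `ν₁` alone. -/
lemma coreSep
    (ht1 : 0 < θ₁) (ht1' : θ₁ < 1) (ht2 : 0 < θ₂) (ht2' : θ₂ < 1) (hcA : 0 < cA)
    (hγ₁ : 1 < γ₁) (hγ₂ : 1 < γ₂)
    (hg1 : γ₁ = 1 + θ₁ * γ₂)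
    (hlam : 0 < lam) (hlam' : lam < 1)
    (E1 : lam * (1 - 1/γ₁) = (1 - lam) * θ₂)
    (E2 : (1 - lam) * (1 - 1/γ₂) = lam * θ₁)
    (hatom : ∀ r : ℝ, μW {r} = 0)
    (hfinW : ∀ s t : ℝ, 0 < s → μW (Ioc s t) ≠ ∞)
    (hpos1 : ∀ t : ℝ, 0 < t → ν₁ (Ioi t) ≠ 0) (hpos2 : ∀ t : ℝ, 0 < t → ν₂ (Ioi t) ≠ 0)
    (H1 : ∀ s t : ℝ, 0 < s → s ≤ t →
      ENNReal.ofReal cA * ∫⁻ r in Ioc s t, (ν₂ (Ioi r)) ^ θ₁ ∂μW ≤ ν₁ (Ioc s t))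
    (H2 : ∀ s t : ℝ, 0 < s → s ≤ t →
      ENNReal.ofReal cA * ∫⁻ r in Ioc s t, (ν₁ (Ioi r)) ^ θ₂ ∂μW ≤ ν₂ (Ioc s t))
    {s : ℝ} (hs : 0 < s) :
    ENNReal.ofReal (min ((cA / 4 * min (1/γ₁) (1/γ₂) / 4) ^ γ₁)
        (cA * (cA / 4 * min (1/γ₁) (1/γ₂) / 4) ^ (γ₁ - 1) / 2))
      * (μW (Ioi s)) ^ γ₁ ≤ ν₁ (Ioi s) := by
  set cS : ℝ := cA / 4 * min (1/γ₁) (1/γ₂) with hcS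
  have hcSpos : 0 < cS := by
    have h1 : (0:ℝ) < min (1/γ₁) (1/γ₂) := lt_min (by positivity) (by positivity)
    have h2 : (0:ℝ) < cA / 4 := by linarith
    exact _root_.mul_pos h2 h1
  set c : ℝ := min ((cS / 4) ^ γ₁) (cA * (cS / 4) ^ (γ₁ - 1) / 2) with hc
  have hcpos : 0 < c := by
    apply lt_min (by positivity) (by positivity)
  have hmain : ∀ t : ℝ, 0 < t → ENNReal.ofReal cS * μW (Ioi t)
      ≤ (ν₁ (Ioi t)) ^ (1/γ₁) + (ν₂ (Ioi t)) ^ (1/γ₂) :=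
    fun t ht => coreMain ht1 ht1' ht2 ht2' hcA hγ₁ hγ₂ hlam hlam' E1 E2 hatom
      hpos1 hpos2 H1 H2 ht
  -- key rescaling fact
  have hresc : ∀ x : ℝ≥0∞, ENNReal.ofReal (cS/2) * (x / 2) = ENNReal.ofReal (cS/4) * x := by
    intro x
    rw [ENNReal.div_eq_inv_mul, ← mul_assoc]
    congr 1
    rw [← ENNReal.ofReal_ofNat 2, ← ENNReal.ofReal_inv_of_pos (by norm_num : (0:ℝ) < 2),
      ← ENNReal.ofReal_mul (by positivity)]
    congr 1
    ring
  rcases eq_or_ne (μW (Ioi s)) 0 with hW0 | hW0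
  · rw [hW0, ENNReal.zero_rpow_of_pos (by positivity), mul_zero]
    exact zero_le
  rcases eq_or_ne (μW (Ioi s)) ∞ with hWtop | hWtop
  · -- infinite case: show ν₁ (Ioi s) = ∞
    suffices hν : ν₁ (Ioi s) = ∞ by
      rw [hν]; exact le_top
    by_cases hex : ∃ t, s < t ∧ ν₁ (Ioi t) = ∞
    · obtain ⟨t, hst, ht⟩ := hex
      exact top_le_iff.1 (ht ▸ antitone_measure_Ioi ν₁ hst.le)
    · push_neg at hex
      have hν₂top : ∀ t, s < t → ν₂ (Ioi t) = ∞ := by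
        intro t hst
        have hWt : μW (Ioi t) = ∞ := by
          have hsplit := Ioi_split μW hst.le
          rcases eq_or_ne (μW (Ioi t)) ∞ with h | h
          · exact h
          · exact absurd (hsplit ▸ ENNReal.add_ne_top.2 ⟨hfinW s t hs, h⟩) (fun hh => hh hWtop)
        have hm := hmain t (lt_trans hs hst)
        rw [hWt, ENNReal.mul_top (by
          simp only [ne_eq, ENNReal.ofReal_eq_zero, not_le]
          exact hcSpos)] at hm
        have hψtop := top_le_iff.1 hm
        rcases ENNReal.add_eq_top.1 hψtop with h | h
        · exfalso
          rw [ENNReal.rpow_eq_top_iff] at h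
          rcases h with ⟨h0, hneg⟩ | ⟨htop, -⟩
          · exact absurd (by positivity : (0:ℝ) < 1/γ₁) (not_lt.2 hneg.le)
          · exact hex t hst htop
        · rw [ENNReal.rpow_eq_top_iff] at h
          rcases h with ⟨h0, hneg⟩ | ⟨htop, -⟩
          · exact absurd (by positivity : (0:ℝ) < 1/γ₂) (not_lt.2 hneg.le)
          · exact htop
      have hex0 : ∃ k : ℕ, μW (Ioc s (s + (k:ℝ) + 1)) ≠ 0 := by
        by_contra hall
        push_neg at hall
        apply hW0
        rw [Ioc_sup μW s]
        simp [hall]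
      obtain ⟨k, hk⟩ := hex0
      set t₀ : ℝ := s + (k:ℝ) + 1 with ht₀
      have hst₀ : s ≤ t₀ := by simp only [ht₀]; linarith
      have hint : (∞ : ℝ≥0∞) ≤ ∫⁻ r in Ioc s t₀, (ν₂ (Ioi r)) ^ θ₁ ∂μW := by
        calc (∞ : ℝ≥0∞) = ∞ * μW (Ioc s t₀) := by rw [ENNReal.top_mul hk]
          _ = ∫⁻ _ in Ioc s t₀, (∞ : ℝ≥0∞) ∂μW := (MeasureTheory.setLIntegral_const _ _).symm
          _ ≤ ∫⁻ r in Ioc s t₀, (ν₂ (Ioi r)) ^ θ₁ ∂μW := by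
              apply MeasureTheory.setLIntegral_mono
              · exact ((antitone_measure_Ioi ν₂).measurable.pow measurable_const)
              · intro r hr
                rw [hν₂top r hr.1, ENNReal.top_rpow_of_pos ht1]
      have hH := H1 s t₀ hs hst₀
      rw [show (∫⁻ r in Ioc s t₀, (ν₂ (Ioi r)) ^ θ₁ ∂μW) = ∞ from top_le_iff.1 hint,
        ENNReal.mul_top (by
          simp only [ne_eq, ENNReal.ofReal_eq_zero, not_le]
          exact hcA)] at hH
      exact top_le_iff.1 (le_trans hH (measure_mono Set.Ioc_subset_Ioi_self))
  · -- finite positive case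
    obtain ⟨rh, hsrh, hWrh⟩ := halving μW hatom hW0 hWtop
    have hμIoc : μW (Ioc s rh) = μW (Ioi s) / 2 := by
      have hsplit := Ioi_split μW hsrh.le
      rw [hWrh] at hsplit
      have hhne : μW (Ioi s) / 2 ≠ ∞ :=
        ne_top_of_le_ne_top hWtop (ENNReal.half_le_self)
      calc μW (Ioc s rh) = μW (Ioi s) - μW (Ioi s) / 2 :=
            ENNReal.eq_sub_of_add_eq hhne hsplit.symm
          _ = μW (Ioi s) / 2 := ENNReal.sub_half hWtop
    by_cases hyes : ∃ r, r ∈ Ioc s rh ∧ (ENNReal.ofReal (cS/2) * μW (Ioi r)) ^ γ₁ ≤ ν₁ (Ioi r)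
    · obtain ⟨r, hr, hbound⟩ := hyes
      calc ENNReal.ofReal c * (μW (Ioi s)) ^ γ₁
          ≤ ENNReal.ofReal ((cS/4) ^ γ₁) * (μW (Ioi s)) ^ γ₁ :=
            mul_le_mul_left (ENNReal.ofReal_le_ofReal (min_le_left _ _)) _
        _ = (ENNReal.ofReal (cS/4) * μW (Ioi s)) ^ γ₁ := by
            rw [ENNReal.mul_rpow_of_nonneg _ _ (by positivity : (0:ℝ) ≤ γ₁),
              ← ofReal_rpow' (by positivity) (by positivity)]
        _ = (ENNReal.ofReal (cS/2) * (μW (Ioi s) / 2)) ^ γ₁ := by rw [hresc]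
        _ = (ENNReal.ofReal (cS/2) * μW (Ioi rh)) ^ γ₁ := by rw [hWrh]
        _ ≤ (ENNReal.ofReal (cS/2) * μW (Ioi r)) ^ γ₁ := by
            apply ENNReal.rpow_le_rpow _ (by positivity)
            exact mul_le_mul_right (antitone_measure_Ioi μW hr.2) _
        _ ≤ ν₁ (Ioi r) := hbound
        _ ≤ ν₁ (Ioi s) := antitone_measure_Ioi ν₁ hr.1.le
    · push_neg at hyes
      have hν₂big : ∀ r, r ∈ Ioc s rh →
          (ENNReal.ofReal (cS/4) * μW (Ioi s)) ^ (γ₁ - 1) ≤ (ν₂ (Ioi r)) ^ θ₁ := by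
        intro r hr
        have hWrfin : μW (Ioi r) ≠ ∞ := fun h =>
          hWtop (top_le_iff.1 (h ▸ antitone_measure_Ioi μW hr.1.le))
        have hlt := hyes r hr
        have hk1 : (ν₁ (Ioi r)) ^ (1/γ₁) < ENNReal.ofReal (cS/2) * μW (Ioi r) := by
          have h' := ENNReal.rpow_lt_rpow hlt (by positivity : (0:ℝ) < 1/γ₁)
          rwa [← ENNReal.rpow_mul, mul_one_div, div_self (by positivity : γ₁ ≠ 0),
            ENNReal.rpow_one] at h'
        have hm := hmain r (lt_trans hs hr.1)
        have hsplitC : ENNReal.ofReal cS * μW (Ioi r)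
            = ENNReal.ofReal (cS/2) * μW (Ioi r) + ENNReal.ofReal (cS/2) * μW (Ioi r) := by
          rw [← add_mul, ← ENNReal.ofReal_add (by positivity) (by positivity)]
          norm_num
        have h2 : ENNReal.ofReal (cS/2) * μW (Ioi r) ≤ (ν₂ (Ioi r)) ^ (1/γ₂) := by
          have hBfin : ENNReal.ofReal (cS/2) * μW (Ioi r) ≠ ∞ :=
            ENNReal.mul_ne_top ENNReal.ofReal_ne_top hWrfin
          have hch : ENNReal.ofReal (cS/2) * μW (Ioi r) + ENNReal.ofReal (cS/2) * μW (Ioi r)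
              ≤ ENNReal.ofReal (cS/2) * μW (Ioi r) + (ν₂ (Ioi r)) ^ (1/γ₂) := by
            rw [← hsplitC]
            exact le_trans hm (add_le_add_left hk1.le _)
          exact (ENNReal.add_le_add_iff_left hBfin).1 hch
        have h3 : (ENNReal.ofReal (cS/2) * μW (Ioi r)) ^ γ₂ ≤ ν₂ (Ioi r) := by
          have h' := ENNReal.rpow_le_rpow h2 (by positivity : (0:ℝ) ≤ γ₂)
          rwa [← ENNReal.rpow_mul, one_div, inv_mul_cancel₀ (by positivity : γ₂ ≠ 0),
            ENNReal.rpow_one] at h'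
        calc (ENNReal.ofReal (cS/4) * μW (Ioi s)) ^ (γ₁ - 1)
            = (ENNReal.ofReal (cS/2) * μW (Ioi rh)) ^ (γ₁ - 1) := by rw [hWrh, hresc]
          _ ≤ (ENNReal.ofReal (cS/2) * μW (Ioi r)) ^ (γ₁ - 1) := by
              apply ENNReal.rpow_le_rpow _ (by linarith)
              exact mul_le_mul_right (antitone_measure_Ioi μW hr.2) _
          _ = ((ENNReal.ofReal (cS/2) * μW (Ioi r)) ^ γ₂) ^ θ₁ := by
              rw [← ENNReal.rpow_mul]
              congr 1
              rw [hg1]; ring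
          _ ≤ (ν₂ (Ioi r)) ^ θ₁ := ENNReal.rpow_le_rpow h3 ht1.le
      calc ENNReal.ofReal c * (μW (Ioi s)) ^ γ₁
          ≤ ENNReal.ofReal (cA * (cS/4) ^ (γ₁ - 1) / 2) * (μW (Ioi s)) ^ γ₁ :=
            mul_le_mul_left (ENNReal.ofReal_le_ofReal (min_le_right _ _)) _
        _ = ENNReal.ofReal cA * ((ENNReal.ofReal (cS/4) * μW (Ioi s)) ^ (γ₁ - 1) * (μW (Ioi s) / 2)) := by
            rw [ENNReal.mul_rpow_of_nonneg _ _ (by linarith : (0:ℝ) ≤ γ₁ - 1),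
              ← ofReal_rpow' (by positivity) (by linarith)]
            rw [show ENNReal.ofReal (cA * (cS/4) ^ (γ₁ - 1) / 2)
                = ENNReal.ofReal cA * ENNReal.ofReal ((cS/4) ^ (γ₁ - 1)) * ENNReal.ofReal (1/2) by
              rw [← ENNReal.ofReal_mul (by positivity), ← ENNReal.ofReal_mul (by positivity)]
              congr 1
              ring]
            have hWpow : (μW (Ioi s)) ^ γ₁ = (μW (Ioi s)) ^ (γ₁ - 1) * μW (Ioi s) := by
              have h0 := ENNReal.rpow_add (γ₁ - 1) 1 hW0 hWtop
              simp only [ENNReal.rpow_one, sub_add_cancel] at h0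
              exact h0
            rw [hWpow]
            have hdiv2 : μW (Ioi s) / 2 = ENNReal.ofReal (1/2) * μW (Ioi s) := by
              rw [ENNReal.div_eq_inv_mul, one_div,
                ENNReal.ofReal_inv_of_pos (by norm_num : (0:ℝ) < 2), ENNReal.ofReal_ofNat]
            rw [hdiv2]
            ring
        _ ≤ ENNReal.ofReal cA * ((ENNReal.ofReal (cS/4) * μW (Ioi s)) ^ (γ₁ - 1) * μW (Ioc s rh)) := by
            rw [hμIoc]
        _ ≤ ENNReal.ofReal cA * ∫⁻ r in Ioc s rh, (ν₂ (Ioi r)) ^ θ₁ ∂μW := by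
            apply mul_le_mul_right
            calc (ENNReal.ofReal (cS/4) * μW (Ioi s)) ^ (γ₁ - 1) * μW (Ioc s rh)
                = ∫⁻ _ in Ioc s rh, (ENNReal.ofReal (cS/4) * μW (Ioi s)) ^ (γ₁ - 1) ∂μW :=
                  (MeasureTheory.setLIntegral_const _ _).symm
              _ ≤ ∫⁻ r in Ioc s rh, (ν₂ (Ioi r)) ^ θ₁ ∂μW := by
                  apply MeasureTheory.setLIntegral_mono
                  · exact ((antitone_measure_Ioi ν₂).measurable.pow measurable_const)
                  · exact hν₂big
        _ ≤ ν₁ (Ioc s rh) := H1 s rh hs hsrh.le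
        _ ≤ ν₁ (Ioi s) := measure_mono Set.Ioc_subset_Ioi_self

end Core

section Inst

variable {n : ℕ} {p α q : ℝ}

/-- truncated (tail) Wolff potential. -/
def tailW (n : ℕ) (α p : ℝ) (μ : Measure (Rn n)) (x : Rn n) (t : ℝ) : ℝ≥0∞ :=
  ∫⁻ r in Ioi t,
    (μ (ball x r) / ENNReal.ofReal (r ^ ((n : ℝ) - α * p))) ^ (1 / (p - 1))
      * ENNReal.ofReal (1 / r)

lemma wolff_eq_tailW (μ : Measure (Rn n)) (x : Rn n) :
    wolff n α p μ x = tailW n α p μ x 0 := rfl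

/-- the integrand of the (tail) Wolff potential. -/
def wint (n : ℕ) (α p : ℝ) (μ : Measure (Rn n)) (x : Rn n) (r : ℝ) : ℝ≥0∞ :=
  (μ (ball x r) / ENNReal.ofReal (r ^ ((n : ℝ) - α * p))) ^ (1 / (p - 1))
    * ENNReal.ofReal (1 / r)

lemma tailW_eq_wint (μ : Measure (Rn n)) (x : Rn n) (t : ℝ) :
    tailW n α p μ x t = ∫⁻ r in Ioi t, wint n α p μ x r := rfl

lemma meas_wint (μ : Measure (Rn n)) (x : Rn n) : Measurable (wint n α p μ x) := by
  apply Measurable.mul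
  · apply Measurable.pow _ measurable_const
    apply Measurable.div
    · exact Monotone.measurable (fun r r' hrr' => measure_mono (ball_subset_ball hrr'))
    · exact (measurable_id.pow measurable_const).ennreal_ofReal
  · exact (measurable_const.div measurable_id).ennreal_ofReal

lemma meas_tailW (μ : Measure (Rn n)) (x : Rn n) :
    Antitone (fun t => tailW n α p μ x t) := fun a b hab =>
  lintegral_mono_set (Set.Ioi_subset_Ioi hab)

/-- shift lemma: comparability of Wolff potentials at nearby points. -/
lemma shiftW (hp : 1 < p) (hm : 0 < (n : ℝ) - α * p) (μ : Measure (Rn n))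
    {x y : Rn n} {t : ℝ} (ht : 0 < t) (hy : y ∈ ball x t) :
    ENNReal.ofReal ((((2:ℝ) ^ ((n : ℝ) - α * p))⁻¹) ^ (1 / (p - 1))) * tailW n α p μ x t
      ≤ wolff n α p μ y := by
  set m : ℝ := (n : ℝ) - α * p with hmdef
  set a : ℝ := 1 / (p - 1) with hadef
  have ha : 0 < a := by
    have hp1 : 0 < p - 1 := by linarith
    rw [hadef]; positivity
  set c : ℝ≥0∞ := ENNReal.ofReal ((2:ℝ) ^ m) with hcdef
  have hc0 : c ≠ 0 := by
    rw [hcdef]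
    simp only [ne_eq, ENNReal.ofReal_eq_zero, not_le]
    positivity
  have hctop : c ≠ ∞ := ENNReal.ofReal_ne_top
  -- F: the shifted integrand
  set F : ℝ → ℝ≥0∞ := fun s =>
    (μ (ball x (s/2)) / ENNReal.ofReal (s ^ m)) ^ a * ENNReal.ofReal (1/s) with hFdef
  have hFmeas : Measurable F := by
    apply Measurable.mul
    · apply Measurable.pow _ measurable_const
      apply Measurable.div
      · apply Monotone.measurable
        intro r r' hrr'
        exact measure_mono (ball_subset_ball (by linarith))
      · exact (measurable_id.pow measurable_const).ennreal_ofReal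
    · exact (measurable_const.div measurable_id).ennreal_ofReal
  -- step 1 : wolff μ y ≥ ∫_{Ioi 2t} F
  have step1 : ∫⁻ s in Ioi (2*t), F s ≤ wolff n α p μ y := by
    rw [wolff_eq_tailW, tailW_eq_wint]
    have hsub : Ioi (2*t) ⊆ Ioi (0:ℝ) := by
      intro z hz
      simp only [mem_Ioi] at *
      linarith
    refine le_trans ?_ (lintegral_mono_set hsub)
    apply MeasureTheory.setLIntegral_mono (meas_wint μ y)
    intro s hs
    simp only [mem_Ioi] at hs
    rw [hFdef]
    apply mul_le_mul_left
    apply ENNReal.rpow_le_rpow _ ha.le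
    apply ENNReal.div_le_div_right
    apply measure_mono
    intro z hz
    rw [mem_ball] at *
    calc dist z y ≤ dist z x + dist x y := dist_triangle _ _ _
      _ < s/2 + t := by
          have := mem_ball.1 hy
          rw [dist_comm x y]
          exact add_lt_add hz this
      _ < s := by linarith
  -- step 2 : change of variables
  have step2 : ∫⁻ r in Ioi t, F (2*r) = ENNReal.ofReal (1/2) * ∫⁻ s in Ioi (2*t), F s := by
    have hmeas2 : Measurable fun r : ℝ => 2 * r := measurable_const_mul 2
    have hpre : (fun r : ℝ => 2 * r) ⁻¹' (Ioi (2*t)) = Ioi t := by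
      ext z; simp only [mem_preimage, mem_Ioi]; constructor <;> intro h <;> linarith
    calc ∫⁻ r in Ioi t, F (2*r)
        = ∫⁻ s, F s ∂(Measure.map (fun r : ℝ => 2 * r) (volume.restrict (Ioi t))) :=
          (lintegral_map hFmeas hmeas2).symm
      _ = ∫⁻ s, F s ∂((Measure.map (fun r : ℝ => 2 * r) volume).restrict (Ioi (2*t))) := by
          rw [Measure.restrict_map hmeas2 measurableSet_Ioi, hpre]
      _ = ∫⁻ s, F s ∂((ENNReal.ofReal |(2:ℝ)⁻¹| • volume).restrict (Ioi (2*t))) := by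
          rw [Real.map_volume_mul_left (by norm_num : (2:ℝ) ≠ 0)]
      _ = ENNReal.ofReal (1/2) * ∫⁻ s in Ioi (2*t), F s := by
          rw [MeasureTheory.Measure.restrict_smul, lintegral_smul_measure]
          congr 1
          rw [abs_of_pos (by norm_num : (0:ℝ) < (2:ℝ)⁻¹)]
          norm_num
  -- step 3 : pointwise identity for F (2 r), r > 0
  have step3 : ∀ r : ℝ, r ∈ Ioi t →
      F (2*r) = (c⁻¹) ^ a * ENNReal.ofReal (1/2) * wint n α p μ x r := by
    intro r hr
    have hr0 : 0 < r := lt_trans ht hr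
    rw [hFdef]
    simp only
    have h1 : (2*r)/2 = r := by ring
    have h2 : ENNReal.ofReal ((2*r) ^ m) = c * ENNReal.ofReal (r ^ m) := by
      rw [hcdef, ← ENNReal.ofReal_mul (by positivity), ← Real.mul_rpow (by norm_num) hr0.le]
    have h3 : ENNReal.ofReal (1/(2*r)) = ENNReal.ofReal (1/2) * ENNReal.ofReal (1/r) := by
      rw [← ENNReal.ofReal_mul (by norm_num)]
      congr 1
      field_simp
    rw [h1, h2, h3, wint]
    have h4 : μ (ball x r) / (c * ENNReal.ofReal (r ^ m))
        = c⁻¹ * (μ (ball x r) / ENNReal.ofReal (r ^ m)) := by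
      rw [div_eq_mul_inv, div_eq_mul_inv, ENNReal.mul_inv (Or.inl hc0) (Or.inl hctop)]
      ring
    rw [h4, ENNReal.mul_rpow_of_nonneg _ _ ha.le]
    ring
  -- step 4 : combine
  have step4 : ∫⁻ r in Ioi t, F (2*r)
      = (c⁻¹) ^ a * ENNReal.ofReal (1/2) * tailW n α p μ x t := by
    rw [tailW_eq_wint, ← MeasureTheory.lintegral_const_mul _ (meas_wint μ x)]
    apply MeasureTheory.setLIntegral_congr_fun measurableSet_Ioi
    exact fun r hr => step3 r hr
  have hc' : ENNReal.ofReal ((((2:ℝ) ^ m)⁻¹) ^ a) = (c⁻¹) ^ a := by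
    rw [ofReal_rpow' (by positivity) ha.le, hcdef,
      ENNReal.ofReal_inv_of_pos (by positivity : (0:ℝ) < (2:ℝ) ^ m)]
  rw [hc']
  -- cancel the 1/2 factor
  have hcan : (c⁻¹) ^ a * tailW n α p μ x t ≤ ∫⁻ s in Ioi (2*t), F s := by
    have h5 : ENNReal.ofReal (1/2) * ((c⁻¹) ^ a * tailW n α p μ x t)
        = ENNReal.ofReal (1/2) * ∫⁻ s in Ioi (2*t), F s := by
      rw [← step2, step4]; ring
    have h6 : ENNReal.ofReal (1/2) ≠ 0 := by
      simp only [ne_eq, ENNReal.ofReal_eq_zero, not_le]; norm_num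
    exact le_of_eq ((ENNReal.mul_right_inj h6 ENNReal.ofReal_ne_top).1 h5)
  exact le_trans hcan step1


/-- lower bound for the mass of `σ.withDensity (f ^ q)` on balls. -/
lemma massW (hp : 1 < p) (hm : 0 < (n : ℝ) - α * p) {q : ℝ} (hq : 0 < q)
    {σ : Measure (Rn n)} (ω : Measure (Rn n)) {f : Rn n → ℝ≥0∞}
    (hf : ∀ᵐ y ∂σ, wolff n α p ω y ≤ f y)
    (x : Rn n) {r : ℝ} (hr : 0 < r) :
    (ENNReal.ofReal ((((2:ℝ) ^ ((n : ℝ) - α * p))⁻¹) ^ (1 / (p - 1)))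
        * tailW n α p ω x r) ^ q * σ (ball x r)
      ≤ σ.withDensity (fun y => f y ^ q) (ball x r) := by
  rw [MeasureTheory.withDensity_apply _ measurableSet_ball]
  set C : ℝ≥0∞ := ENNReal.ofReal ((((2:ℝ) ^ ((n : ℝ) - α * p))⁻¹) ^ (1 / (p - 1)))
    * tailW n α p ω x r with hC
  have hae : ∀ᵐ y ∂(σ.restrict (ball x r)), C ^ q ≤ f y ^ q := by
    rw [ae_restrict_iff' measurableSet_ball]
    filter_upwards [hf] with y hy hyball
    exact ENNReal.rpow_le_rpow (le_trans (shiftW hp hm ω hr hyball) hy) hq.le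
  calc C ^ q * σ (ball x r) = ∫⁻ _ in ball x r, C ^ q ∂σ :=
        (MeasureTheory.setLIntegral_const _ _).symm
    _ ≤ ∫⁻ y in ball x r, f y ^ q ∂σ := lintegral_mono_ae hae

/-- pointwise comparison of Wolff integrands. -/
lemma pointH1 (hp : 1 < p) (hm : 0 < (n : ℝ) - α * p) {q : ℝ} (hq : 0 < q)
    {σ : Measure (Rn n)} (ω : Measure (Rn n)) {f : Rn n → ℝ≥0∞}
    (hf : ∀ᵐ y ∂σ, wolff n α p ω y ≤ f y)
    (x : Rn n) {r : ℝ} (hr : 0 < r) :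
    ENNReal.ofReal (((((2:ℝ) ^ ((n : ℝ) - α * p))⁻¹) ^ (1 / (p - 1))) ^ (q * (1 / (p - 1))))
        * (wint n α p σ x r * (tailW n α p ω x r) ^ (q * (1 / (p - 1))))
      ≤ wint n α p (σ.withDensity fun y => f y ^ q) x r := by
  set m : ℝ := (n : ℝ) - α * p with hmdef
  set a : ℝ := 1 / (p - 1) with hadef
  have ha : 0 < a := by
    have hp1 : 0 < p - 1 := by linarith
    rw [hadef]; positivity
  set c₀ : ℝ := (((2:ℝ) ^ m)⁻¹) ^ a with hc₀
  have hc₀pos : 0 < c₀ := by rw [hc₀]; positivity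
  set T : ℝ≥0∞ := tailW n α p ω x r with hT
  have hmass := massW hp hm hq ω hf x hr
  rw [← hT, ← hc₀] at hmass
  have hdivmono := ENNReal.div_le_div_right hmass (ENNReal.ofReal (r ^ m))
  have hrpow := ENNReal.rpow_le_rpow hdivmono ha.le
  unfold wint
  rw [← hmdef, ← hadef]
  refine le_trans ?_ (mul_le_mul_left hrpow (ENNReal.ofReal (1/r)))
  rw [mul_div_assoc, ENNReal.mul_rpow_of_nonneg _ _ ha.le, ← ENNReal.rpow_mul,
    ENNReal.mul_rpow_of_nonneg _ _ (by positivity : (0:ℝ) ≤ q * a),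
    ofReal_rpow' hc₀pos.le (by positivity)]
  ring_nf
  exact le_refl _

/-- the tail measures on `(0,∞)`. -/
def tmeas (n : ℕ) (α p : ℝ) (μ : Measure (Rn n)) (x : Rn n) : Measure ℝ :=
  (volume.restrict (Ioi (0:ℝ))).withDensity (wint n α p μ x)

lemma tmeas_Ioi (μ : Measure (Rn n)) (x : Rn n) {t : ℝ} (ht : 0 ≤ t) :
    tmeas n α p μ x (Ioi t) = tailW n α p μ x t := by
  rw [tmeas, MeasureTheory.withDensity_apply _ measurableSet_Ioi,
    MeasureTheory.Measure.restrict_restrict measurableSet_Ioi,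
    Set.inter_eq_left.2 (Set.Ioi_subset_Ioi ht), tailW_eq_wint]

lemma tmeas_Ioc (μ : Measure (Rn n)) (x : Rn n) {s t : ℝ} (hs : 0 < s) :
    tmeas n α p μ x (Ioc s t) = ∫⁻ r in Ioc s t, wint n α p μ x r := by
  rw [tmeas, MeasureTheory.withDensity_apply _ measurableSet_Ioc,
    MeasureTheory.Measure.restrict_restrict measurableSet_Ioc,
    Set.inter_eq_left.2 (show Ioc s t ⊆ Ioi 0 from fun z hz => lt_trans hs hz.1)]

lemma tmeas_atom (μ : Measure (Rn n)) (x : Rn n) (r : ℝ) :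
    tmeas n α p μ x {r} = 0 := by
  rw [tmeas, MeasureTheory.withDensity_apply _ (measurableSet_singleton r)]
  apply MeasureTheory.setLIntegral_measure_zero
  rw [MeasureTheory.Measure.restrict_apply (measurableSet_singleton r)]
  exact measure_mono_null Set.inter_subset_left (measure_singleton r)

/-- positivity of tails. -/
lemma tail_pos (hp : 1 < p) (hm : 0 < (n : ℝ) - α * p)
    {μ : Measure (Rn n)} (hμ : μ ≠ 0) (x : Rn n) {t : ℝ} (ht : 0 < t) :
    tailW n α p μ x t ≠ 0 := by
  set m : ℝ := (n : ℝ) - α * p with hmdef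
  set a : ℝ := 1 / (p - 1) with hadef
  have ha : 0 < a := by
    have hp1 : 0 < p - 1 := by linarith
    rw [hadef]; positivity
  -- find a ball of positive measure
  have hball : ∃ k : ℕ, μ (ball x k) ≠ 0 := by
    by_contra hall
    push_neg at hall
    apply hμ
    have : μ univ = 0 := by
      rw [← Metric.iUnion_ball_nat x]
      exact measure_mono_null (fun z hz => hz) (measure_iUnion_null hall)
    exact (Measure.measure_univ_eq_zero).1 this
  obtain ⟨k, hk⟩ := hball
  set R : ℝ := max (k:ℝ) (t + 1) with hR
  have hRt : t + 1 ≤ R := le_max_right _ _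
  have hRk : (k:ℝ) ≤ R := le_max_left _ _
  have hR0 : 0 < R := by linarith
  have hμR : μ (ball x R) ≠ 0 := fun h =>
    hk (measure_mono_null (ball_subset_ball hRk) h)
  set K : ℝ≥0∞ := (μ (ball x R) / ENNReal.ofReal ((R+1) ^ m)) ^ a
    * ENNReal.ofReal (1/(R+1)) with hK
  have hKpos : K ≠ 0 := by
    rw [hK]
    apply mul_ne_zero
    · rw [ne_eq, ENNReal.rpow_eq_zero_iff]
      rintro (⟨hdiv, -⟩ | ⟨-, hneg⟩)
      · rw [ENNReal.div_eq_zero_iff] at hdiv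
        rcases hdiv with h | h
        · exact hμR h
        · exact ENNReal.ofReal_ne_top h
      · linarith
    · simp only [ne_eq, ENNReal.ofReal_eq_zero, not_le]
      positivity
  intro htail
  apply hKpos
  have hsub : Ioc R (R+1) ⊆ Ioi t := fun z hz => by
    simp only [mem_Ioi, mem_Ioc] at *
    linarith [hz.1]
  have hle : K * volume (Ioc R (R+1)) ≤ tailW n α p μ x t := by
    rw [tailW_eq_wint]
    calc K * volume (Ioc R (R+1)) = ∫⁻ _ in Ioc R (R+1), K := by
          rw [MeasureTheory.setLIntegral_const]
      _ ≤ ∫⁻ r in Ioc R (R+1), wint n α p μ x r := by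
          apply MeasureTheory.setLIntegral_mono (meas_wint μ x)
          intro r hrm
          simp only [wint]
          rw [← hmdef, ← hadef, hK]
          apply mul_le_mul'
          · apply ENNReal.rpow_le_rpow _ ha.le
            apply ENNReal.div_le_div
            · exact measure_mono (ball_subset_ball (le_of_lt hrm.1))
            · apply ENNReal.ofReal_le_ofReal
              apply Real.rpow_le_rpow (by linarith [hrm.1]) hrm.2 (by linarith [hm])
          · apply ENNReal.ofReal_le_ofReal
            apply one_div_le_one_div_of_le (by linarith [hrm.1]) hrm.2
      _ ≤ ∫⁻ r in Ioi t, wint n α p μ x r := lintegral_mono_set hsub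
  rw [htail] at hle
  have hvol : volume (Ioc R (R+1)) = 1 := by
    rw [Real.volume_Ioc]
    norm_num
  rw [hvol, mul_one] at hle
  exact le_antisymm hle (zero_le)

/-- finiteness of the base tail measure on compact intervals. -/
lemma tmeas_fin (hp : 1 < p) (hm : 0 < (n : ℝ) - α * p)
    {σ : Measure (Rn n)} [IsLocallyFiniteMeasure σ] (x : Rn n)
    {s t : ℝ} (hs : 0 < s) : tmeas n α p σ x (Ioc s t) ≠ ∞ := by
  set m : ℝ := (n : ℝ) - α * p with hmdef
  set a : ℝ := 1 / (p - 1) with hadef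
  have ha : 0 < a := by
    have hp1 : 0 < p - 1 := by linarith
    rw [hadef]; positivity
  set C : ℝ≥0∞ := (σ (ball x t) / ENNReal.ofReal (s ^ m)) ^ a * ENNReal.ofReal (1/s) with hC
  have hCfin : C ≠ ∞ := by
    rw [hC]
    apply ENNReal.mul_ne_top _ ENNReal.ofReal_ne_top
    apply (ENNReal.rpow_lt_top_of_nonneg ha.le _).ne
    apply (ENNReal.div_lt_top (measure_ball_lt_top).ne _).ne
    simp only [ne_eq, ENNReal.ofReal_eq_zero, not_le]
    positivity
  rw [tmeas_Ioc σ x hs]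
  have hbound : ∫⁻ r in Ioc s t, wint n α p σ x r ≤ C * volume (Ioc s t) := by
    calc ∫⁻ r in Ioc s t, wint n α p σ x r ≤ ∫⁻ _ in Ioc s t, C := by
          apply MeasureTheory.setLIntegral_mono measurable_const
          intro r hrm
          simp only [wint]
          rw [← hmdef, ← hadef, hC]
          apply mul_le_mul'
          · apply ENNReal.rpow_le_rpow _ ha.le
            apply ENNReal.div_le_div
            · exact measure_mono (ball_subset_ball hrm.2)
            · apply ENNReal.ofReal_le_ofReal
              apply Real.rpow_le_rpow hs.le (le_of_lt hrm.1) (by linarith [hm])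
          · apply ENNReal.ofReal_le_ofReal
            apply one_div_le_one_div_of_le hs (le_of_lt hrm.1)
      _ = C * volume (Ioc s t) := MeasureTheory.setLIntegral_const _ _
  intro htop
  rw [htop] at hbound
  exact absurd (top_le_iff.1 hbound)
    (ENNReal.mul_ne_top hCfin (by rw [Real.volume_Ioc]; exact ENNReal.ofReal_ne_top))

/-- withDensity of a positive power is nonzero. -/
lemma wd_ne {σ : Measure (Rn n)} {q : ℝ} (hq : 0 < q) {f : Rn n → ℝ≥0∞}
    (hf : Measurable f) (h : ¬ (∀ᵐ y ∂σ, f y = 0)) :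
    σ.withDensity (fun y => f y ^ q) ≠ 0 := by
  intro h0
  apply h
  have : σ.withDensity (fun y => f y ^ q) univ = 0 := by rw [h0]; rfl
  rw [MeasureTheory.withDensity_apply _ MeasurableSet.univ, Measure.restrict_univ] at this
  have hz := (MeasureTheory.lintegral_eq_zero_iff (hf.pow measurable_const)).1 this
  filter_upwards [hz] with y hy
  simp only [Pi.zero_apply] at hy
  rw [ENNReal.rpow_eq_zero_iff] at hy
  rcases hy with ⟨h1, -⟩ | ⟨-, h2⟩
  · exact h1
  · linarith

lemma rpow_iSup (f : ℕ → ℝ≥0∞) {γ : ℝ} (hγ : 0 < γ) :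
    (⨆ k, f k) ^ γ = ⨆ k, (f k) ^ γ := by
  apply le_antisymm
  · have h1 : ∀ k, f k ≤ (⨆ j, (f j) ^ γ) ^ (1/γ) := fun k => by
      have h2 := ENNReal.rpow_le_rpow (le_iSup (fun j => (f j) ^ γ) k)
        (by positivity : (0:ℝ) ≤ 1/γ)
      rwa [← ENNReal.rpow_mul, mul_one_div, div_self hγ.ne', ENNReal.rpow_one] at h2
    have h4 := ENNReal.rpow_le_rpow (iSup_le h1) hγ.le
    rwa [← ENNReal.rpow_mul, one_div, inv_mul_cancel₀ hγ.ne', ENNReal.rpow_one] at h4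
  · exact iSup_le fun k => ENNReal.rpow_le_rpow (le_iSup f k) hγ.le

lemma gammaFacts {p q₁ q₂ : ℝ} (hp : 1 < p) (hq₁ : 0 < q₁) (hq₁' : q₁ < p - 1)
    (hq₂ : 0 < q₂) (hq₂' : q₂ < p - 1) :
    0 < q₁ * (1/(p-1)) ∧ q₁ * (1/(p-1)) < 1 ∧ 0 < q₂ * (1/(p-1)) ∧ q₂ * (1/(p-1)) < 1 ∧
    1 < gamma1 p q₁ q₂ ∧ 1 < gamma2 p q₁ q₂ ∧
    gamma1 p q₁ q₂ = 1 + (q₁ * (1/(p-1))) * gamma2 p q₁ q₂ ∧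
    gamma2 p q₁ q₂ = 1 + (q₂ * (1/(p-1))) * gamma1 p q₁ q₂ := by
  have he : 0 < p - 1 := by linarith
  have hD : 0 < (p-1)^2 - q₁*q₂ := by nlinarith
  refine ⟨by positivity, ?_, by positivity, ?_, ?_, ?_, ?_, ?_⟩
  · rw [mul_one_div, div_lt_one he]; linarith
  · rw [mul_one_div, div_lt_one he]; linarith
  · rw [gamma1, lt_div_iff₀ hD]; nlinarith
  · rw [gamma2, lt_div_iff₀ hD]; nlinarith
  · rw [gamma1, gamma2]
    field_simp
    ring
  · rw [gamma1, gamma2]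
    have hD' : (p - 1) ^ 2 - q₁ * q₂ ≠ 0 := hD.ne'
    have he' : p - 1 ≠ 0 := he.ne'
    have h' : q₂ * (1/(p-1)) * ((p-1)*(p-1+q₁)/((p-1)^2-q₁*q₂))
        = q₂*(p-1+q₁)/((p-1)^2-q₁*q₂) := by
      rw [mul_div_assoc', one_div, mul_assoc, inv_mul_cancel_left₀ he']
    rw [h', one_add_div hD']
    congr 1
    ring

lemma lamFacts {θ₁ θ₂ γ₁ γ₂ : ℝ} (h1 : 0 < θ₁) (h2 : 0 < θ₂) (hγ₁ : 1 < γ₁) (hγ₂ : 1 < γ₂)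
    (hg1 : γ₁ = 1 + θ₁*γ₂) (hg2 : γ₂ = 1 + θ₂*γ₁) :
    ∃ lam, 0 < lam ∧ lam < 1 ∧ lam * (1 - 1/γ₁) = (1-lam) * θ₂ ∧
      (1-lam) * (1 - 1/γ₂) = lam * θ₁ := by
  have hγ₁0 : γ₁ ≠ 0 := by linarith
  have hγ₂0 : γ₂ ≠ 0 := by linarith
  set S : ℝ := θ₂*γ₁ + θ₁*γ₂ with hS
  have hSpos : 0 < S := by
    rw [hS]
    have : 0 < θ₂*γ₁ := by positivity
    have : 0 < θ₁*γ₂ := by positivity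
    linarith
  have hkey1 : γ₁ - 1 = θ₁*γ₂ := by linarith
  have hkey2 : γ₂ - 1 = θ₂*γ₁ := by linarith
  refine ⟨θ₂*γ₁/S, by positivity, ?_, ?_, ?_⟩
  · rw [div_lt_one hSpos]
    have : 0 < θ₁*γ₂ := by positivity
    linarith
  · have h1m : 1 - θ₂*γ₁/S = θ₁*γ₂/S := by
      field_simp
      linarith
    rw [h1m]
    have hl : 1 - 1/γ₁ = θ₁*γ₂/γ₁ := by
      field_simp
      linarith
    rw [hl]
    field_simp
  · have h1m : 1 - θ₂*γ₁/S = θ₁*γ₂/S := by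
      field_simp
      linarith
    rw [h1m]
    have hl : 1 - 1/γ₂ = θ₂*γ₁/γ₂ := by
      field_simp
      linarith
    rw [hl]
    field_simp


/-- verification of the core integral hypothesis. -/
lemma instH1 (hp : 1 < p) (hm : 0 < (n : ℝ) - α * p) {q : ℝ} (hq : 0 < q)
    {σ : Measure (Rn n)} (ω : Measure (Rn n)) {f : Rn n → ℝ≥0∞}
    (hf : ∀ᵐ y ∂σ, wolff n α p ω y ≤ f y) (x : Rn n)
    {s t : ℝ} (hs : 0 < s) (hst : s ≤ t) :
    ENNReal.ofReal (((((2:ℝ) ^ ((n : ℝ) - α * p))⁻¹) ^ (1 / (p - 1))) ^ (q * (1 / (p - 1))))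
        * ∫⁻ r in Ioc s t, (tmeas n α p ω x (Ioi r)) ^ (q * (1 / (p - 1))) ∂(tmeas n α p σ x)
      ≤ tmeas n α p (σ.withDensity fun y => f y ^ q) x (Ioc s t) := by
  have hmeasT : Measurable fun r : ℝ => (tailW n α p ω x r) ^ (q * (1 / (p - 1))) :=
    (meas_tailW ω x).measurable.pow measurable_const
  have hstepA : ∫⁻ r in Ioc s t, (tmeas n α p ω x (Ioi r)) ^ (q * (1 / (p - 1)))
        ∂(tmeas n α p σ x)
      = ∫⁻ r in Ioc s t, wint n α p σ x r * (tailW n α p ω x r) ^ (q * (1 / (p - 1))) := by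
    have h1 : ∫⁻ r in Ioc s t, (tmeas n α p ω x (Ioi r)) ^ (q * (1 / (p - 1)))
          ∂(tmeas n α p σ x)
        = ∫⁻ r in Ioc s t, (tailW n α p ω x r) ^ (q * (1 / (p - 1)))
          ∂(tmeas n α p σ x) := by
      apply MeasureTheory.setLIntegral_congr_fun measurableSet_Ioc
      intro r hr
      dsimp only
      rw [tmeas_Ioi ω x (le_of_lt (lt_trans hs hr.1))]
    rw [h1, tmeas, MeasureTheory.restrict_withDensity measurableSet_Ioc,
      MeasureTheory.Measure.restrict_restrict measurableSet_Ioc,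
      Set.inter_eq_left.2 (show Ioc s t ⊆ Ioi 0 from fun z hz => lt_trans hs hz.1),
      MeasureTheory.lintegral_withDensity_eq_lintegral_mul _ (meas_wint σ x) hmeasT]
    rfl
  rw [hstepA, tmeas_Ioc _ x hs,
    ← MeasureTheory.lintegral_const_mul (f := fun r => wint n α p σ x r * (tailW n α p ω x r) ^ (q * (1 / (p - 1)))) _ ((meas_wint σ x).mul hmeasT)]
  apply MeasureTheory.setLIntegral_mono (meas_wint _ x)
  intro r hr
  exact pointH1 hp hm hq ω hf x (lt_trans hs hr.1)


end Inst

/-- Lemma 3.2: lower Wolff-potential bounds for nontrivial supersolutions of the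
Wolff integral system. -/
theorem supersolution_lower_bound (n : ℕ) (hn : 1 ≤ n) (p α q₁ q₂ : ℝ)
    (hp : 1 < p) (hα : 0 < α) (hαn : α < (n : ℝ) / p)
    (hq₁ : 0 < q₁) (hq₁' : q₁ < p - 1) (hq₂ : 0 < q₂) (hq₂' : q₂ < p - 1) :
    ∃ c : ℝ, 0 < c ∧
      ∀ σ : Measure (Rn n), IsLocallyFiniteMeasure σ →
        ∀ u v : Rn n → ℝ≥0∞,
          isWolffSuper n α p q₁ q₂ σ u v → nontrivialPair n σ u v →
          (∀ᵐ x ∂σ,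
            ENNReal.ofReal c * (wolff n α p σ x) ^ gamma1 p q₁ q₂ ≤ u x) ∧
          (∀ᵐ x ∂σ,
            ENNReal.ofReal c * (wolff n α p σ x) ^ gamma2 p q₁ q₂ ≤ v x) := by
  have hp1 : 0 < p - 1 := by linarith
  have hm : 0 < (n : ℝ) - α * p := by
    have hp0 : 0 < p := by linarith
    have := (lt_div_iff₀ hp0).1 hαn
    linarith
  obtain ⟨ht1, ht1', ht2, ht2', hγ₁, hγ₂, hg1, hg2⟩ := gammaFacts hp hq₁ hq₁' hq₂ hq₂'
  obtain ⟨lam, hlam, hlam', E1, E2⟩ := lamFacts ht1 ht2 hγ₁ hγ₂ hg1 hg2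
  set γ₁ : ℝ := gamma1 p q₁ q₂ with hγ₁def
  set γ₂ : ℝ := gamma2 p q₁ q₂ with hγ₂def
  set θ₁ : ℝ := q₁ * (1/(p-1)) with hθ₁def
  set θ₂ : ℝ := q₂ * (1/(p-1)) with hθ₂def
  set c₀ : ℝ := (((2:ℝ) ^ ((n : ℝ) - α * p))⁻¹) ^ (1 / (p - 1)) with hc₀def
  have hc₀pos : 0 < c₀ := by rw [hc₀def]; positivity
  set cA : ℝ := min (c₀ ^ θ₁) (c₀ ^ θ₂) with hcAdef
  have hcA : 0 < cA := lt_min (by positivity) (by positivity)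
  set c₁ : ℝ := min ((cA / 4 * min (1/γ₁) (1/γ₂) / 4) ^ γ₁)
    (cA * (cA / 4 * min (1/γ₁) (1/γ₂) / 4) ^ (γ₁ - 1) / 2) with hc₁def
  set c₂ : ℝ := min ((cA / 4 * min (1/γ₂) (1/γ₁) / 4) ^ γ₂)
    (cA * (cA / 4 * min (1/γ₂) (1/γ₁) / 4) ^ (γ₂ - 1) / 2) with hc₂def
  have hmin12 : 0 < min (1/γ₁) (1/γ₂) := lt_min (by positivity) (by positivity)
  have hmin21 : 0 < min (1/γ₂) (1/γ₁) := lt_min (by positivity) (by positivity)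
  have hc₁pos : 0 < c₁ := lt_min (by positivity) (by positivity)
  have hc₂pos : 0 < c₂ := lt_min (by positivity) (by positivity)
  refine ⟨min c₁ c₂, lt_min hc₁pos hc₂pos, ?_⟩
  intro σ hσ u v hsuper hnt
  obtain ⟨humeas, hvmeas, -, -, hWv, hWu⟩ := hsuper
  set ν₁' : Measure (Rn n) := σ.withDensity (fun y => v y ^ q₁) with hν₁def
  set ν₂' : Measure (Rn n) := σ.withDensity (fun y => u y ^ q₂) with hν₂def
  have hν₁ne : ν₁' ≠ 0 := wd_ne hq₁ hvmeas hnt.2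
  have hν₂ne : ν₂' ≠ 0 := wd_ne hq₂ humeas hnt.1
  -- the core hypotheses, for each x
  have hH1 : ∀ x : Rn n, ∀ s t : ℝ, 0 < s → s ≤ t →
      ENNReal.ofReal cA * ∫⁻ r in Ioc s t, (tmeas n α p ν₂' x (Ioi r)) ^ θ₁
        ∂(tmeas n α p σ x) ≤ tmeas n α p ν₁' x (Ioc s t) := by
    intro x s t hs hst
    refine le_trans (mul_le_mul_left (ENNReal.ofReal_le_ofReal (min_le_left _ _)) _) ?_
    exact instH1 hp hm hq₁ ν₂' hWu x hs hst
  have hH2 : ∀ x : Rn n, ∀ s t : ℝ, 0 < s → s ≤ t →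
      ENNReal.ofReal cA * ∫⁻ r in Ioc s t, (tmeas n α p ν₁' x (Ioi r)) ^ θ₂
        ∂(tmeas n α p σ x) ≤ tmeas n α p ν₂' x (Ioc s t) := by
    intro x s t hs hst
    refine le_trans (mul_le_mul_left (ENNReal.ofReal_le_ofReal (min_le_right _ _)) _) ?_
    exact instH1 hp hm hq₂ ν₁' hWv x hs hst
  have hpos1 : ∀ x : Rn n, ∀ t : ℝ, 0 < t → tmeas n α p ν₁' x (Ioi t) ≠ 0 := by
    intro x t ht
    rw [tmeas_Ioi _ x ht.le]
    exact tail_pos hp hm hν₁ne x ht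
  have hpos2 : ∀ x : Rn n, ∀ t : ℝ, 0 < t → tmeas n α p ν₂' x (Ioi t) ≠ 0 := by
    intro x t ht
    rw [tmeas_Ioi _ x ht.le]
    exact tail_pos hp hm hν₂ne x ht
  -- apply the core separation lemma
  have key1 : ∀ x : Rn n, ∀ s : ℝ, 0 < s →
      ENNReal.ofReal c₁ * (tmeas n α p σ x (Ioi s)) ^ γ₁ ≤ tmeas n α p ν₁' x (Ioi s) := by
    intro x s hs
    exact coreSep ht1 ht1' ht2 ht2' hcA hγ₁ hγ₂ hg1 hlam hlam' E1 E2
      (tmeas_atom σ x) (fun s' t' hs' => tmeas_fin hp hm x hs')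
      (hpos1 x) (hpos2 x) (hH1 x) (hH2 x) hs
  have key2 : ∀ x : Rn n, ∀ s : ℝ, 0 < s →
      ENNReal.ofReal c₂ * (tmeas n α p σ x (Ioi s)) ^ γ₂ ≤ tmeas n α p ν₂' x (Ioi s) := by
    intro x s hs
    have E1' : (1 - lam) * (1 - 1/γ₂) = (1 - (1 - lam)) * θ₁ := by
      have h : 1 - (1 - lam) = lam := by ring
      rw [h]; exact E2
    have E2' : (1 - (1 - lam)) * (1 - 1/γ₁) = (1 - lam) * θ₂ := by
      have h : 1 - (1 - lam) = lam := by ring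
      rw [h]; exact E1
    exact coreSep ht2 ht2' ht1 ht1' hcA hγ₂ hγ₁ hg2 (by linarith) (by linarith) E1' E2'
      (tmeas_atom σ x) (fun s' t' hs' => tmeas_fin hp hm x hs')
      (hpos2 x) (hpos1 x) (hH2 x) (hH1 x) hs
  -- pass to the limit s → 0
  have limit : ∀ (ν : Measure (Rn n)) (cc γ : ℝ), 0 < γ →
      (∀ x : Rn n, ∀ s : ℝ, 0 < s →
        ENNReal.ofReal cc * (tmeas n α p σ x (Ioi s)) ^ γ ≤ tmeas n α p ν x (Ioi s)) →
      ∀ x : Rn n, ENNReal.ofReal cc * (wolff n α p σ x) ^ γ ≤ wolff n α p ν x := by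
    intro ν cc γ hγ hkey x
    have h0 : wolff n α p σ x = tmeas n α p σ x (Ioi 0) := by
      rw [tmeas_Ioi σ x (le_refl 0), wolff_eq_tailW]
    rw [h0, Ioi_rc (tmeas n α p σ x) 0, rpow_iSup _ hγ, ENNReal.mul_iSup]
    apply iSup_le
    intro k
    have hk0 : (0:ℝ) < 0 + ((k:ℝ)+1)⁻¹ := by positivity
    calc ENNReal.ofReal cc * (tmeas n α p σ x (Ioi (0 + ((k:ℝ)+1)⁻¹))) ^ γ
        ≤ tmeas n α p ν x (Ioi (0 + ((k:ℝ)+1)⁻¹)) := hkey x _ hk0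
      _ = tailW n α p ν x (0 + ((k:ℝ)+1)⁻¹) := tmeas_Ioi ν x hk0.le
      _ ≤ tailW n α p ν x 0 := meas_tailW ν x hk0.le
      _ = wolff n α p ν x := (wolff_eq_tailW ν x).symm
  have keyW1 : ∀ x : Rn n, ENNReal.ofReal c₁ * (wolff n α p σ x) ^ γ₁ ≤ wolff n α p ν₁' x :=
    limit ν₁' c₁ γ₁ (by linarith) key1
  have keyW2 : ∀ x : Rn n, ENNReal.ofReal c₂ * (wolff n α p σ x) ^ γ₂ ≤ wolff n α p ν₂' x :=
    limit ν₂' c₂ γ₂ (by linarith) key2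
  constructor
  · filter_upwards [hWv] with x hx
    calc ENNReal.ofReal (min c₁ c₂) * (wolff n α p σ x) ^ γ₁
        ≤ ENNReal.ofReal c₁ * (wolff n α p σ x) ^ γ₁ :=
          mul_le_mul_left (ENNReal.ofReal_le_ofReal (min_le_left _ _)) _
      _ ≤ wolff n α p ν₁' x := keyW1 x
      _ ≤ u x := hx
  · filter_upwards [hWu] with x hx
    calc ENNReal.ofReal (min c₁ c₂) * (wolff n α p σ x) ^ γ₂
        ≤ ENNReal.ofReal c₂ * (wolff n α p σ x) ^ γ₂ :=
          mul_le_mul_left (ENNReal.ofReal_le_ofReal (min_le_right _ _)) _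
      _ ≤ wolff n α p ν₂' x := keyW2 x
      _ ≤ v x := hx
end
end

section
/- Let n ≥ 1, 1 < p < ∞, 0 < q₁ < p−1, 0 < q₂ < p−1, 0 < α < n/p, and let σ be a nonnegative Radon measure on ℝⁿ. Suppose κ > 0 is a constant such that for every r > 0 and every x ∈ ℝⁿ one has W_{α,p}((W_{α,p}σ)^r dσ)(x) ≥ κ^{r/(p−1)} (W_{α,p}σ(x))^{r/(p−1)+1}. Let w : ℝⁿ → [0,∞] be a σ-measurable function and suppose that for some constants c > 0 and δ > 0 one has w(y) ≥ c (W_{α,p}σ(y))^{δ} for σ-a.e. y ∈ ℝⁿ. Then for every x ∈ ℝⁿ at which w(x) ≥ W_{α,p}((W_{α,p}(w^{q₂} dσ))^{q₁} dσ)(x) holds, one has w(x) ≥ c^{q₁q₂/(p−1)²} · κ^{q₁(p−1+2q₂δ)/(p−1)²} · (W_{α,p}σ(x))^{(q₁/(p−1))((q₂/(p−1))δ+1)+1}. -/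
open MeasureTheory Metric Set ENNReal

noncomputable section

lemma wolff_mono (n : ℕ) (α p : ℝ) (he : (0:ℝ) ≤ 1 / (p - 1)) (σ : Measure (Rn n))
    {f g : Rn n → ℝ≥0∞} (h : ∀ᵐ y ∂σ, f y ≤ g y) (x : Rn n) :
    wolff n α p (σ.withDensity f) x ≤ wolff n α p (σ.withDensity g) x := by
  refine lintegral_mono fun t => ?_
  refine mul_le_mul_left (ENNReal.rpow_le_rpow (ENNReal.div_le_div_right ?_ _) he) _
  rw [withDensity_apply _ measurableSet_ball, withDensity_apply _ measurableSet_ball]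
  exact lintegral_mono_ae (ae_restrict_of_ae h)

lemma wolff_smul (n : ℕ) (α p : ℝ) (σ : Measure (Rn n))
    (f : Rn n → ℝ≥0∞) (k : ℝ≥0∞) (hk : k ≠ ∞) (hp : (0:ℝ) ≤ 1 / (p - 1)) (x : Rn n) :
    wolff n α p (σ.withDensity fun y => k * f y) x
      = k ^ (1 / (p - 1)) * wolff n α p (σ.withDensity f) x := by
  have hwd : σ.withDensity (fun y => k * f y) = k • σ.withDensity f := by
    exact withDensity_smul' k f hk
  unfold wolff
  rw [hwd, ← lintegral_const_mul' _ _ (ENNReal.rpow_ne_top_of_nonneg hp hk)]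
  congr 1
  ext t
  rw [Measure.smul_apply, smul_eq_mul, mul_div_assoc,
    ENNReal.mul_rpow_of_nonneg _ _ hp, mul_assoc]


/-- Claim 1 in the proof of Lemma 3.2: bootstrapping a lower bound for a function
satisfying the iterated Wolff inequality. -/
theorem wolff_bootstrap (n : ℕ) (hn : 1 ≤ n) (p α q₁ q₂ κ c δ : ℝ)
    (hp : 1 < p) (hα : 0 < α) (hαn : α < (n : ℝ) / p)
    (hq₁ : 0 < q₁) (hq₁' : q₁ < p - 1) (hq₂ : 0 < q₂) (hq₂' : q₂ < p - 1)
    (hκ : 0 < κ) (hc : 0 < c) (hδ : 0 < δ)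
    (σ : Measure (Rn n)) (hσ : IsLocallyFiniteMeasure σ)
    (hκσ : ∀ (r : ℝ), 0 < r → ∀ x : Rn n,
      ENNReal.ofReal κ ^ (r / (p - 1)) * (wolff n α p σ x) ^ (r / (p - 1) + 1) ≤
        wolff n α p (σ.withDensity fun y => (wolff n α p σ y) ^ r) x)
    (w : Rn n → ℝ≥0∞) (hw : Measurable w)
    (hlow : ∀ᵐ y ∂σ, ENNReal.ofReal c * (wolff n α p σ y) ^ δ ≤ w y) :
    ∀ x : Rn n,
      wolff n α p (σ.withDensity fun y =>
        (wolff n α p (σ.withDensity fun z => w z ^ q₂) y) ^ q₁) x ≤ w x →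
      ENNReal.ofReal c ^ (q₁ * q₂ / (p - 1) ^ 2) *
        ENNReal.ofReal κ ^ (q₁ * (p - 1 + 2 * q₂ * δ) / (p - 1) ^ 2) *
        (wolff n α p σ x) ^ ((q₁ / (p - 1)) * ((q₂ / (p - 1)) * δ + 1) + 1) ≤ w x := by
  intro x hx
  have hp1 : (0:ℝ) < p - 1 := by linarith
  have hne : p - 1 ≠ 0 := hp1.ne'
  have he : (0:ℝ) ≤ 1 / (p - 1) := by positivity
  set W := wolff n α p σ with hW
  set A := ENNReal.ofReal c with hA
  set K := ENNReal.ofReal κ with hK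
  have hA0 : A ≠ 0 := (ENNReal.ofReal_pos.2 hc).ne'
  have hAt : A ≠ ∞ := ENNReal.ofReal_ne_top
  have hK0 : K ≠ 0 := (ENNReal.ofReal_pos.2 hκ).ne'
  have hKt : K ≠ ∞ := ENNReal.ofReal_ne_top
  -- Step A
  have hAe : ∀ᵐ y ∂σ, A ^ q₂ * W y ^ (q₂ * δ) ≤ w y ^ q₂ := by
    filter_upwards [hlow] with y hy
    calc A ^ q₂ * W y ^ (q₂ * δ) = (A * W y ^ δ) ^ q₂ := by
          rw [ENNReal.mul_rpow_of_nonneg _ _ hq₂.le, mul_comm q₂ δ, ENNReal.rpow_mul]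
      _ ≤ w y ^ q₂ := ENNReal.rpow_le_rpow hy hq₂.le
  set s : ℝ := q₂ * δ / (p - 1) + 1 with hsdef
  have hs : 0 < s := by
    have : 0 ≤ q₂ * δ / (p - 1) := div_nonneg (by positivity) hp1.le
    simp only [hsdef]; linarith
  set C1 : ℝ≥0∞ := (A ^ q₂) ^ (1/(p-1)) * K ^ (q₂ * δ / (p - 1)) with hC1def
  have hAq₂t : A ^ q₂ ≠ ∞ := ENNReal.rpow_ne_top_of_nonneg hq₂.le hAt
  have hC1t : C1 ≠ ∞ := ENNReal.mul_ne_top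
    (ENNReal.rpow_ne_top_of_nonneg he hAq₂t)
    (ENNReal.rpow_ne_top_of_nonneg (div_nonneg (by positivity) hp1.le) hKt)
  -- Step B
  have hB : ∀ y, C1 * W y ^ s ≤ wolff n α p (σ.withDensity fun z => w z ^ q₂) y := by
    intro y
    calc C1 * W y ^ s
        = (A ^ q₂) ^ (1/(p-1)) * (K ^ (q₂ * δ / (p - 1)) * W y ^ (q₂ * δ / (p - 1) + 1)) := by
          rw [hC1def, hsdef, mul_assoc]
      _ ≤ (A ^ q₂) ^ (1/(p-1)) * wolff n α p (σ.withDensity fun z => W z ^ (q₂ * δ)) y :=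
          mul_le_mul_right (hκσ (q₂ * δ) (mul_pos hq₂ hδ) y) _
      _ = wolff n α p (σ.withDensity fun z => A ^ q₂ * W z ^ (q₂ * δ)) y :=
          (wolff_smul n α p σ _ _ hAq₂t he y).symm
      _ ≤ wolff n α p (σ.withDensity fun z => w z ^ q₂) y := wolff_mono n α p he σ hAe y
  -- Step C
  have hCe : ∀ᵐ y ∂σ, C1 ^ q₁ * W y ^ (s * q₁)
      ≤ (wolff n α p (σ.withDensity fun z => w z ^ q₂) y) ^ q₁ := by
    refine ae_of_all _ fun y => ?_
    calc C1 ^ q₁ * W y ^ (s * q₁) = (C1 * W y ^ s) ^ q₁ := by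
          rw [ENNReal.mul_rpow_of_nonneg C1 (W y ^ s) hq₁.le, ← ENNReal.rpow_mul (W y) s q₁]
      _ ≤ _ := ENNReal.rpow_le_rpow (hB y) hq₁.le
  set r : ℝ := s * q₁ with hrdef
  have hr : 0 < r := mul_pos hs hq₁
  -- Step D
  have hD : (C1 ^ q₁) ^ (1/(p-1)) * (K ^ (r/(p-1)) * W x ^ (r/(p-1) + 1))
      ≤ wolff n α p (σ.withDensity fun y =>
        (wolff n α p (σ.withDensity fun z => w z ^ q₂) y) ^ q₁) x := by
    calc (C1 ^ q₁) ^ (1/(p-1)) * (K ^ (r/(p-1)) * W x ^ (r/(p-1) + 1))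
        ≤ (C1 ^ q₁) ^ (1/(p-1)) * wolff n α p (σ.withDensity fun z => W z ^ r) x :=
          mul_le_mul_right (hκσ r hr x) _
      _ = wolff n α p (σ.withDensity fun z => C1 ^ q₁ * W z ^ r) x :=
          (wolff_smul n α p σ _ _ (ENNReal.rpow_ne_top_of_nonneg hq₁.le hC1t) he x).symm
      _ ≤ _ := wolff_mono n α p he σ hCe x
  -- Constant bookkeeping
  have key : (C1 ^ q₁) ^ (1/(p-1))
      = A ^ (q₁ * q₂ / (p - 1) ^ 2) * K ^ (q₁ * q₂ * δ / (p - 1) ^ 2) := by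
    rw [hC1def, ← ENNReal.rpow_mul,
      ENNReal.mul_rpow_of_nonneg _ _ (mul_nonneg hq₁.le he),
      ← ENNReal.rpow_mul, ← ENNReal.rpow_mul, ← ENNReal.rpow_mul]
    congr 1
    · congr 1; field_simp
    · congr 1; field_simp
  have heq : A ^ (q₁ * q₂ / (p - 1) ^ 2) * K ^ (q₁ * (p - 1 + 2 * q₂ * δ) / (p - 1) ^ 2) *
        W x ^ ((q₁ / (p - 1)) * ((q₂ / (p - 1)) * δ + 1) + 1)
      = (C1 ^ q₁) ^ (1/(p-1)) * (K ^ (r/(p-1)) * W x ^ (r/(p-1) + 1)) := by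
    rw [key,
      show r/(p-1) + 1 = (q₁ / (p - 1)) * ((q₂ / (p - 1)) * δ + 1) + 1 by
        rw [hrdef, hsdef]; field_simp,
      show q₁ * (p - 1 + 2 * q₂ * δ) / (p - 1) ^ 2
          = q₁ * q₂ * δ / (p - 1) ^ 2 + r/(p-1) by
        rw [hrdef, hsdef]; field_simp; ring,
      ENNReal.rpow_add _ _ hK0 hKt]
    ring
  exact heq.le.trans (hD.trans hx)
end
end

section
/- Let n ≥ 1, 1 < p < ∞, 0 < α < n/p, let σ be a nonnegative Radon measure on ℝⁿ, let R > 0, and let σ' denote the restriction of σ to the complement of the ball B(0,2R). Then for every y ∈ B(0,R) one has W_{α,p}σ'(y) ≤ 2^{(n−αp)/(p−1)} ∫_R^∞ (σ(B(0,t))/t^{n−αp})^{1/(p−1)} dt/t. -/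
open MeasureTheory Metric Set ENNReal

noncomputable section

/-- Tail estimate in the proof of Lemma 3.4: the Wolff potential of the restriction of `σ`
to the complement of `B(0,2R)` is uniformly bounded on `B(0,R)`. -/
theorem wolff_restrict_tail_bound (n : ℕ) (hn : 1 ≤ n) (p α : ℝ)
    (hp : 1 < p) (hα : 0 < α) (hαn : α < (n : ℝ) / p)
    (σ : Measure (Rn n)) (hσ : IsLocallyFiniteMeasure σ) (R : ℝ) (hR : 0 < R) :
    ∀ y ∈ ball (0 : Rn n) R,
      wolff n α p (σ.restrict ((ball (0 : Rn n) (2 * R))ᶜ)) y ≤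
        ENNReal.ofReal (2 ^ (((n : ℝ) - α * p) / (p - 1))) *
          ∫⁻ t in Ioi R,
            (σ (ball (0 : Rn n) t) / ENNReal.ofReal (t ^ ((n : ℝ) - α * p)))
              ^ (1 / (p - 1)) * ENNReal.ofReal (1 / t) := by
  intro y hy
  rw [mem_ball, dist_zero_right] at hy
  have hp0 : (0:ℝ) < p := lt_trans one_pos hp
  have hp1 : (0:ℝ) < p - 1 := by linarith
  have hβ : 0 < (n:ℝ) - α * p := by
    have h1 : α * p < (n:ℝ) := (lt_div_iff₀ hp0).mp hαn
    linarith
  have hq : (0:ℝ) < 1 / (p - 1) := by positivity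
  set β : ℝ := (n:ℝ) - α * p with hβdef
  set q : ℝ := 1 / (p - 1) with hqdef
  set F : ℝ → ℝ≥0∞ := fun s =>
    (σ (ball (0 : Rn n) s) / ENNReal.ofReal (s ^ β)) ^ q * ENNReal.ofReal (1 / s) with hFdef
  set c : ℝ≥0∞ := ENNReal.ofReal (2 ^ (β / (p - 1))) with hcdef
  have hσm : Measurable (fun s : ℝ => σ (ball (0 : Rn n) s)) :=
    Monotone.measurable fun a b hab => measure_mono (ball_subset_ball hab)
  have hFm : Measurable F := by
    refine Measurable.mul ?_ (ENNReal.measurable_ofReal.comp (measurable_const.div measurable_id))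
    exact ENNReal.continuous_rpow_const.measurable.comp
      (hσm.div ((ENNReal.continuous_ofReal.comp (Real.continuous_rpow_const hβ.le)).measurable))
  set h : ℝ → ℝ≥0∞ := fun t =>
    (σ (ball (0 : Rn n) (2*t)) / ENNReal.ofReal (t ^ β)) ^ q * ENNReal.ofReal (1 / t) with hhdef
  -- Step 1: pointwise bound
  have key1 : wolff n α p (σ.restrict ((ball (0:Rn n) (2*R))ᶜ)) y ≤
      ∫⁻ t in Ioi (0:ℝ), (Ioi R).indicator h t := by
    refine lintegral_mono fun t => ?_
    by_cases ht : R < t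
    · rw [indicator_of_mem (show t ∈ Ioi R from ht)]
      simp only [hhdef]
      have hle : σ.restrict ((ball (0:Rn n) (2*R))ᶜ) (ball y t) ≤ σ (ball (0:Rn n) (2*t)) := by
        rw [Measure.restrict_apply measurableSet_ball]
        refine measure_mono (inter_subset_left.trans (ball_subset_ball' ?_))
        rw [dist_zero_right]
        linarith
      exact mul_le_mul_left
        (ENNReal.rpow_le_rpow (ENNReal.div_le_div_right hle _) hq.le) _
    · rw [indicator_of_notMem (show t ∉ Ioi R from ht)]
      push_neg at ht
      have hz : σ.restrict ((ball (0:Rn n) (2*R))ᶜ) (ball y t) = 0 := by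
        rw [Measure.restrict_apply measurableSet_ball]
        by_cases ht0 : t ≤ 0
        · simp [ball_eq_empty.mpr ht0]
        · push_neg at ht0
          have hsub : ball y t ⊆ ball (0 : Rn n) (2*R) := by
            refine ball_subset_ball' ?_
            rw [dist_zero_right]; linarith
          rw [← Set.diff_eq, Set.diff_eq_empty.mpr hsub]
          simp
      simp only [hhdef] at hz ⊢
      rw [hz, ENNReal.zero_div, ENNReal.zero_rpow_of_pos hq, zero_mul]
  -- Step 2: reduce to Ioi R
  have key2 : ∫⁻ t in Ioi (0:ℝ), (Ioi R).indicator h t = ∫⁻ t in Ioi R, h t := by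
    rw [lintegral_indicator measurableSet_Ioi _, Measure.restrict_restrict measurableSet_Ioi,
      Set.inter_eq_self_of_subset_left (Ioi_subset_Ioi hR.le)]
  -- Step 3: pointwise rewrite
  have key3 : ∀ t ∈ Ioi R, h t = c * 2 * F (2*t) := by
    intro t ht
    rw [mem_Ioi] at ht
    have ht0 : (0:ℝ) < t := hR.trans ht
    have h2β : (0:ℝ) < 2 ^ β := Real.rpow_pos_of_pos two_pos β
    have hc0 : ENNReal.ofReal (2 ^ β) ≠ 0 := ne_of_gt (ENNReal.ofReal_pos.mpr h2β)
    have hctop : ENNReal.ofReal (2 ^ β) ≠ ∞ := ofReal_ne_top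
    have e1 : ENNReal.ofReal ((2*t) ^ β) = ENNReal.ofReal (2 ^ β) * ENNReal.ofReal (t ^ β) := by
      rw [← ENNReal.ofReal_mul h2β.le, ← Real.mul_rpow (by norm_num) ht0.le]
    have e2 : σ (ball (0:Rn n) (2*t)) / ENNReal.ofReal (t ^ β)
        = (σ (ball (0:Rn n) (2*t)) / ENNReal.ofReal ((2*t) ^ β)) * ENNReal.ofReal (2 ^ β) := by
      rw [e1, div_eq_mul_inv, div_eq_mul_inv, ENNReal.mul_inv (Or.inl hc0) (Or.inl hctop)]
      calc σ (ball (0:Rn n) (2*t)) * (ENNReal.ofReal (t ^ β))⁻¹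
          = σ (ball (0:Rn n) (2*t)) * (ENNReal.ofReal (t ^ β))⁻¹ * 1 := by rw [mul_one]
        _ = σ (ball (0:Rn n) (2*t)) * (ENNReal.ofReal (t ^ β))⁻¹
              * ((ENNReal.ofReal (2 ^ β))⁻¹ * ENNReal.ofReal (2 ^ β)) := by
            rw [ENNReal.inv_mul_cancel hc0 hctop]
        _ = σ (ball (0:Rn n) (2*t)) * ((ENNReal.ofReal (2 ^ β))⁻¹ * (ENNReal.ofReal (t ^ β))⁻¹)
              * ENNReal.ofReal (2 ^ β) := by ring
    have e3 : ENNReal.ofReal (1/t) = 2 * ENNReal.ofReal (1/(2*t)) := by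
      have : (1:ℝ)/t = 2 * (1/(2*t)) := by field_simp
      rw [this, ENNReal.ofReal_mul (by norm_num)]
      norm_num
    have e4 : (ENNReal.ofReal (2 ^ β)) ^ q = c := by
      rw [ENNReal.ofReal_rpow_of_pos h2β, hcdef]
      congr 1
      rw [← Real.rpow_mul (by norm_num : (0:ℝ) ≤ 2), hqdef, mul_one_div]
    simp only [hhdef, hFdef]
    rw [e2, ENNReal.mul_rpow_of_nonneg _ _ hq.le, e4, e3]
    ring
  -- Step 4: change of variables
  have key4 : ∫⁻ t in Ioi R, F (2*t) = ENNReal.ofReal (2⁻¹) * ∫⁻ s in Ioi (2*R), F s := by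
    have hind : ∀ t : ℝ, (Ioi R).indicator (fun t => F (2*t)) t = (Ioi (2*R)).indicator F (2*t) := by
      intro t
      by_cases ht : t ∈ Ioi R
      · rw [indicator_of_mem ht, indicator_of_mem]
        rw [mem_Ioi] at ht ⊢
        linarith
      · rw [indicator_of_notMem ht, indicator_of_notMem]
        rw [mem_Ioi] at ht ⊢
        intro hcon; exact ht (by linarith)
    calc ∫⁻ t in Ioi R, F (2*t)
        = ∫⁻ t, (Ioi (2*R)).indicator F (2*t) := by
          rw [← lintegral_indicator measurableSet_Ioi _]
          exact lintegral_congr hind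
      _ = ∫⁻ s, (Ioi (2*R)).indicator F s ∂(Measure.map (fun t : ℝ => 2*t) volume) :=
          (lintegral_map (hFm.indicator measurableSet_Ioi) (measurable_const_mul 2)).symm
      _ = ENNReal.ofReal |(2:ℝ)⁻¹| * ∫⁻ s, (Ioi (2*R)).indicator F s := by
          rw [Real.map_volume_mul_left (two_ne_zero), lintegral_smul_measure, smul_eq_mul]
      _ = ENNReal.ofReal (2⁻¹) * ∫⁻ s in Ioi (2*R), F s := by
          rw [lintegral_indicator measurableSet_Ioi _, abs_of_pos (by norm_num : (0:ℝ) < 2⁻¹)]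
  -- Step 5: enlarge domain
  have key5 : ∫⁻ s in Ioi (2*R), F s ≤ ∫⁻ s in Ioi R, F s :=
    lintegral_mono_set (Ioi_subset_Ioi (by linarith))
  -- Assemble
  have hc_ne_top : c * 2 ≠ ∞ :=
    ENNReal.mul_ne_top ofReal_ne_top ENNReal.ofNat_ne_top
  calc wolff n α p (σ.restrict ((ball (0:Rn n) (2*R))ᶜ)) y
      ≤ ∫⁻ t in Ioi (0:ℝ), (Ioi R).indicator h t := key1
    _ = ∫⁻ t in Ioi R, h t := key2
    _ = ∫⁻ t in Ioi R, c * 2 * F (2*t) :=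
        setLIntegral_congr_fun measurableSet_Ioi (fun t ht => key3 t ht)
    _ = c * 2 * ∫⁻ t in Ioi R, F (2*t) := lintegral_const_mul' _ _ hc_ne_top
    _ = c * 2 * (ENNReal.ofReal (2⁻¹) * ∫⁻ s in Ioi (2*R), F s) := by rw [key4]
    _ = c * ∫⁻ s in Ioi (2*R), F s := by
        rw [← mul_assoc, mul_assoc c 2 _]
        congr 1
        rw [← ENNReal.ofReal_ofNat 2, ← ENNReal.ofReal_mul (by norm_num)]
        norm_num
    _ ≤ c * ∫⁻ s in Ioi R, F s := by gcongr
end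
end

section
/- Let n ≥ 1, 1 < p < ∞, 0 < q₁ < p−1, 0 < q₂ < p−1 and 0 < α < n/p. There exists a constant λ₁ > 0 depending only on n, p, α, q₁ and q₂ such that for every nonnegative Radon measure σ on ℝⁿ, the functions u₀ = λ₁ (W_{α,p}σ)^{γ₁} and v₀ = λ₁ (W_{α,p}σ)^{γ₂} satisfy u₀(x) ≤ W_{α,p}(v₀^{q₁} dσ)(x) and v₀(x) ≤ W_{α,p}(u₀^{q₂} dσ)(x) for every x ∈ ℝⁿ; that is, (u₀, v₀) is a subsolution of the Wolff integral system. -/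
open MeasureTheory Metric Set ENNReal

noncomputable section

namespace WolffAux

lemma setLIntegral_mono_mem {α : Type*} [MeasurableSpace α] {μ : Measure α}
    {s : Set α} (hs : MeasurableSet s) {f g : α → ℝ≥0∞}
    (h : ∀ x ∈ s, f x ≤ g x) :
    ∫⁻ x in s, f x ∂μ ≤ ∫⁻ x in s, g x ∂μ :=
  lintegral_mono_ae ((ae_restrict_iff' hs).2 (ae_of_all _ h))

lemma setLIntegral_congr_mem {α : Type*} [MeasurableSpace α] {μ : Measure α}
    {s : Set α} (hs : MeasurableSet s) {f g : α → ℝ≥0∞}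
    (h : ∀ x ∈ s, f x = g x) :
    ∫⁻ x in s, f x ∂μ = ∫⁻ x in s, g x ∂μ :=
  le_antisymm (setLIntegral_mono_mem hs fun x hx => (h x hx).le)
    (setLIntegral_mono_mem hs fun x hx => (h x hx).ge)

lemma G_sup (g : ℝ → ℝ≥0∞) (hg : Measurable g) (t₀ : ℝ) :
    ∫⁻ s in Ioi t₀, g s = ⨆ k : ℕ, ∫⁻ s in Ioi (t₀ + 1/((k:ℝ)+1)), g s := by
  have h1 : ∀ k : ℕ, ∫⁻ s in Ioi (t₀ + 1/((k:ℝ)+1)), g s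
      = ∫⁻ s, (Ioi (t₀ + 1/((k:ℝ)+1))).indicator g s := fun k =>
    (lintegral_indicator measurableSet_Ioi g).symm
  rw [← lintegral_indicator measurableSet_Ioi g]
  simp_rw [h1]
  rw [← lintegral_iSup]
  · congr 1; funext s
    rcases le_or_gt s t₀ with hs | hs
    · have : ∀ k : ℕ, (Ioi (t₀ + 1/((k:ℝ)+1))).indicator g s = 0 := by
        intro k
        apply indicator_of_notMem
        simp only [mem_Ioi, not_lt]
        have : (0:ℝ) < 1/((k:ℝ)+1) := by positivity
        linarith
      simp only [this, indicator_of_notMem (notMem_Ioi.2 hs) g, iSup_const]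
    · obtain ⟨k, hk⟩ := exists_nat_one_div_lt (sub_pos.2 hs)
      apply le_antisymm
      · have hmem : s ∈ Ioi (t₀ + 1/((k:ℝ)+1)) := by
          simp only [mem_Ioi]; linarith
        calc (Ioi t₀).indicator g s = g s := indicator_of_mem hs g
          _ = (Ioi (t₀ + 1/((k:ℝ)+1))).indicator g s := (indicator_of_mem hmem g).symm
          _ ≤ _ := le_iSup (fun k : ℕ => (Ioi (t₀ + 1/((k:ℝ)+1))).indicator g s) k
      · exact iSup_le fun k => indicator_le_indicator_of_subset
          (Ioi_subset_Ioi (le_add_of_nonneg_right (by positivity))) (fun _ => zero_le) s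
  · exact fun k => hg.indicator measurableSet_Ioi
  · intro k k' hkk'
    apply indicator_le_indicator_of_subset
    · apply Ioi_subset_Ioi
      have : 1/((k':ℝ)+1) ≤ 1/((k:ℝ)+1) := by
        apply one_div_le_one_div_of_le (by positivity)
        exact_mod_cast add_le_add_left (Nat.cast_le.2 hkk') 1
      linarith
    · exact fun _ => zero_le


lemma key_aux (g : ℝ → ℝ≥0∞) (hg : Measurable g) (β : ℝ) (hβ : 0 ≤ β)
    (a : ℝ≥0∞) (hatop : a ≠ ⊤) (haI : a ≤ ∫⁻ t in Ioi (0:ℝ), g t) :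
    (a/2) ^ β * (a/2) ≤ ∫⁻ t in Ioi (0:ℝ), g t * (∫⁻ s in Ioi t, g s) ^ β := by
  rcases eq_or_ne a 0 with rfl | ha0
  · simp only [ENNReal.zero_div, mul_zero]
    exact zero_le
  set G : ℝ → ℝ≥0∞ := fun t => ∫⁻ s in Ioi t, g s with hG
  have hGanti : Antitone G := fun t t' h =>
    lintegral_mono' (Measure.restrict_mono (Ioi_subset_Ioi h) le_rfl) le_rfl
  have ha2top : a/2 ≠ ⊤ := ne_top_of_le_ne_top hatop ENNReal.half_le_self
  have ha2βtop : (a/2) ^ β ≠ ⊤ := ENNReal.rpow_ne_top_of_nonneg hβ ha2top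
  have hhalf : a/2 < a := ENNReal.half_lt_self ha0 hatop
  -- find t' > 0 with a/2 ≤ G t'
  have hIsup : ∫⁻ t in Ioi (0:ℝ), g t = ⨆ k : ℕ, G ((0:ℝ) + 1/((k:ℝ)+1)) := G_sup g hg 0
  have : a/2 < ⨆ k : ℕ, G ((0:ℝ) + 1/((k:ℝ)+1)) := by
    rw [← hIsup]; exact lt_of_lt_of_le hhalf haI
  obtain ⟨k₀, hk₀⟩ := lt_iSup_iff.1 this
  set t' : ℝ := (0:ℝ) + 1/((k₀:ℝ)+1) with ht'
  have ht'pos : 0 < t' := by positivity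
  set S : Set ℝ := {t : ℝ | 0 < t ∧ a/2 ≤ G t} with hS
  have ht'S : t' ∈ S := ⟨ht'pos, hk₀.le⟩
  by_cases hbdd : BddAbove S
  · set t₀ : ℝ := sSup S with ht₀
    have ht₀pos : 0 < t₀ := lt_of_lt_of_le ht'pos (le_csSup hbdd ht'S)
    have hub : G t₀ ≤ a/2 := by
      rw [show G t₀ = ⨆ k : ℕ, G (t₀ + 1/((k:ℝ)+1)) from G_sup g hg t₀]
      apply iSup_le
      intro k
      have hgt : t₀ < t₀ + 1/((k:ℝ)+1) := lt_add_of_pos_right _ (by positivity)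
      have hnot : t₀ + 1/((k:ℝ)+1) ∉ S := fun hmem =>
        absurd (le_csSup hbdd hmem) (not_le.2 hgt)
      have hpos : 0 < t₀ + 1/((k:ℝ)+1) := lt_trans ht₀pos hgt
      by_contra hGa
      exact hnot ⟨hpos, (not_le.1 hGa).le⟩
    -- on Ioo 0 t₀, G ≥ a/2
    have hlow : ∀ t ∈ Ioo (0:ℝ) t₀, a/2 ≤ G t := by
      intro t ht
      obtain ⟨s, hsS, hts⟩ := exists_lt_of_lt_csSup ⟨t', ht'S⟩ ht.2
      exact le_trans hsS.2 (hGanti hts.le)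
    -- mass on Ioo 0 t₀
    have hsplit : ∫⁻ t in Ioi (0:ℝ), g t
        = (∫⁻ t in Ioo (0:ℝ) t₀, g t) + ∫⁻ t in Ici t₀, g t := by
      rw [← lintegral_union measurableSet_Ici]
      · congr 1
        rw [Ioo_union_Ici_eq_Ioi ht₀pos]
      · rw [Set.disjoint_left]
        intro s hs1 hs2
        exact absurd hs2 (not_le.2 hs1.2)
    have hIci : ∫⁻ t in Ici t₀, g t = G t₀ := (setLIntegral_congr Ioi_ae_eq_Ici).symm
    have hmass : a/2 ≤ ∫⁻ t in Ioo (0:ℝ) t₀, g t := by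
      have h1 : a/2 + a/2 ≤ (∫⁻ t in Ioo (0:ℝ) t₀, g t) + a/2 := by
        rw [ENNReal.add_halves]
        calc a ≤ ∫⁻ t in Ioi (0:ℝ), g t := haI
          _ = (∫⁻ t in Ioo (0:ℝ) t₀, g t) + ∫⁻ t in Ici t₀, g t := hsplit
          _ ≤ (∫⁻ t in Ioo (0:ℝ) t₀, g t) + a/2 := by
              rw [hIci]; exact add_le_add_right hub _
      exact ENNReal.le_of_add_le_add_right ha2top h1
    calc (a/2) ^ β * (a/2) ≤ (a/2) ^ β * ∫⁻ t in Ioo (0:ℝ) t₀, g t :=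
        mul_le_mul_right hmass _
      _ = ∫⁻ t in Ioo (0:ℝ) t₀, (a/2) ^ β * g t := (lintegral_const_mul' _ _ ha2βtop).symm
      _ ≤ ∫⁻ t in Ioo (0:ℝ) t₀, g t * G t ^ β := by
          apply setLIntegral_mono_mem measurableSet_Ioo
          intro t ht
          rw [mul_comm]
          exact mul_le_mul_right (ENNReal.rpow_le_rpow (hlow t ht) hβ) _
      _ ≤ ∫⁻ t in Ioi (0:ℝ), g t * G t ^ β :=
          lintegral_mono' (Measure.restrict_mono Ioo_subset_Ioi_self le_rfl) le_rfl
  · -- S unbounded: G ≥ a/2 everywhere on Ioi 0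
    have hlow : ∀ t : ℝ, 0 < t → a/2 ≤ G t := by
      intro t _
      obtain ⟨s, hsS, hts⟩ := (not_bddAbove_iff.1 hbdd) t
      exact le_trans hsS.2 (hGanti hts.le)
    calc (a/2) ^ β * (a/2) ≤ (a/2) ^ β * a := mul_le_mul_right ENNReal.half_le_self _
      _ ≤ (a/2) ^ β * ∫⁻ t in Ioi (0:ℝ), g t := mul_le_mul_right haI _
      _ = ∫⁻ t in Ioi (0:ℝ), (a/2) ^ β * g t := (lintegral_const_mul' _ _ ha2βtop).symm
      _ ≤ ∫⁻ t in Ioi (0:ℝ), g t * G t ^ β := by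
          apply setLIntegral_mono_mem measurableSet_Ioi
          intro t ht
          rw [mul_comm]
          exact mul_le_mul_right (ENNReal.rpow_le_rpow (hlow t ht) hβ) _


lemma key (g : ℝ → ℝ≥0∞) (hg : Measurable g) (β : ℝ) (hβ : 0 ≤ β) :
    ((∫⁻ t in Ioi (0:ℝ), g t) / 2) ^ (1+β)
      ≤ ∫⁻ t in Ioi (0:ℝ), g t * (∫⁻ s in Ioi t, g s) ^ β := by
  set I := ∫⁻ t in Ioi (0:ℝ), g t with hI
  rcases eq_or_ne I 0 with hI0 | hI0
  · rw [hI0, ENNReal.zero_div, ENNReal.zero_rpow_of_pos (by linarith)]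
    exact zero_le
  rcases eq_or_ne I ⊤ with hItop | hItop
  · -- show RHS = ⊤
    have hRHS : ∫⁻ t in Ioi (0:ℝ), g t * (∫⁻ s in Ioi t, g s) ^ β = ⊤ := by
      by_contra hne
      obtain ⟨m, hm⟩ := ENNReal.exists_nat_gt hne
      have hkey := key_aux g hg β hβ (2 * ((m:ℝ≥0∞)+1)) (by
        refine ENNReal.mul_ne_top (by norm_num) ?_
        simp [ENNReal.add_eq_top]) (by rw [← hI, hItop]; exact le_top)
      have h2 : 2 * ((m:ℝ≥0∞)+1) / 2 = (m:ℝ≥0∞)+1 := by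
        rw [mul_comm, mul_div_assoc, ENNReal.div_self (by norm_num) (by norm_num), mul_one]
      rw [h2] at hkey
      have hge1 : (1:ℝ≥0∞) ≤ (m:ℝ≥0∞)+1 := le_add_self
      have : ((m:ℝ≥0∞)+1) ≤ ((m:ℝ≥0∞)+1) ^ β * ((m:ℝ≥0∞)+1) := by
        nth_rewrite 1 [← one_mul ((m:ℝ≥0∞)+1)]
        apply mul_le_mul_left
        calc (1:ℝ≥0∞) = 1 ^ β := (ENNReal.one_rpow β).symm
          _ ≤ ((m:ℝ≥0∞)+1) ^ β := ENNReal.rpow_le_rpow hge1 hβ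
      have hcontr : ((m:ℝ≥0∞)+1) ≤ ∫⁻ t in Ioi (0:ℝ), g t * (∫⁻ s in Ioi t, g s) ^ β :=
        le_trans this hkey
      exact lt_irrefl _ (lt_of_lt_of_le hm (le_trans le_self_add hcontr))
    rw [hRHS]
    exact le_top
  · have hkey := key_aux g hg β hβ I hItop le_rfl
    have h1 : (I/2) ^ (1+β) = (I/2) ^ β * (I/2) := by
      rw [ENNReal.rpow_add 1 β, ENNReal.rpow_one, mul_comm]
      · exact fun h => hI0 (by
          rcases ENNReal.div_eq_zero_iff.1 h with h' | h'
          · exact h'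
          · exact absurd h' (by norm_num))
      · exact ne_top_of_le_ne_top hItop ENNReal.half_le_self
    rw [h1]
    exact hkey


lemma half_subst (f : ℝ → ℝ≥0∞) (hf : Measurable f) (a : ℝ) :
    ∫⁻ s in Ioi (2*a), f (s/2) = 2 * ∫⁻ r in Ioi a, f r := by
  have hφ : Measurable fun r : ℝ => 2*r := measurable_const_mul 2
  have hg : Measurable fun s : ℝ => f (s/2) := hf.comp (measurable_id.div_const 2)
  have h1 : ∫⁻ s in Ioi (2*a), f (s/2) ∂(Measure.map (fun r:ℝ => (2:ℝ)*r) volume)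
      = ∫⁻ r in (fun r:ℝ => (2:ℝ)*r) ⁻¹' Ioi (2*a), f ((2*r)/2) ∂volume :=
    setLIntegral_map measurableSet_Ioi hg hφ
  have hpre : (fun r:ℝ => (2:ℝ)*r) ⁻¹' Ioi (2*a) = Ioi a := by
    ext r
    simp only [mem_preimage, mem_Ioi]
    constructor <;> intro h <;> nlinarith
  have hsimp : ∀ r : ℝ, f ((2*r)/2) = f r := fun r => by norm_num
  rw [hpre] at h1
  simp_rw [hsimp] at h1
  rw [Real.map_volume_mul_left (two_ne_zero), Measure.restrict_smul,
    lintegral_smul_measure] at h1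
  have habs : ENNReal.ofReal |(2:ℝ)⁻¹| = 2⁻¹ := by
    rw [abs_of_pos (by norm_num), ENNReal.ofReal_inv_of_pos (by norm_num)]
    norm_num
  rw [habs] at h1
  calc ∫⁻ s in Ioi (2*a), f (s/2)
      = 2 * (2⁻¹ * ∫⁻ s in Ioi (2*a), f (s/2)) := by
        rw [← mul_assoc, ENNReal.mul_inv_cancel (by norm_num) (by norm_num), one_mul]
    _ = 2 * ∫⁻ r in Ioi a, f r := by rw [← h1, smul_eq_mul]


-- measurability of the Wolff integrand in t
lemma g_meas (n : ℕ) (α p : ℝ) (σ : Measure (Rn n)) (x : Rn n) :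
    Measurable fun t : ℝ =>
      (σ (ball x t) / ENNReal.ofReal (t ^ ((n : ℝ) - α * p))) ^ (1 / (p - 1))
        * ENNReal.ofReal (1 / t) := by
  have h1 : Measurable fun t : ℝ => σ (ball x t) := by
    apply Monotone.measurable
    intro t t' htt'
    exact measure_mono (ball_subset_ball htt')
  have h2 : Measurable fun t : ℝ => ENNReal.ofReal (t ^ ((n : ℝ) - α * p)) :=
    (measurable_id.pow measurable_const).ennreal_ofReal
  have h3 : Measurable fun t : ℝ => ENNReal.ofReal (1 / t) :=
    (measurable_const.div measurable_id).ennreal_ofReal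
  exact (((h1.div h2).pow measurable_const).mul h3)

lemma wolff_ball_lower (n : ℕ) (α p : ℝ) (he : 0 ≤ 1 / (p-1))
    (σ : Measure (Rn n)) (x : Rn n)
    (t : ℝ) (ht : 0 < t) (y : Rn n) (hy : y ∈ ball x t) :
    ENNReal.ofReal (((2:ℝ) ^ ((n : ℝ) - α * p)) ^ (-(1/(p-1)))) *
      ∫⁻ s in Ioi t, (σ (ball x s) / ENNReal.ofReal (s ^ ((n : ℝ) - α * p))) ^ (1/(p-1))
        * ENNReal.ofReal (1/s)
      ≤ wolff n α p σ y := by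
  set κ := (n : ℝ) - α * p with hκ
  set e := 1 / (p-1) with hep
  set F : ℝ → ℝ≥0∞ := fun r =>
    (σ (ball x r) / ENNReal.ofReal ((2*r) ^ κ)) ^ e * ENNReal.ofReal (1 / (2*r)) with hF
  have hFmeas : Measurable F := by
    have h1 : Measurable fun r : ℝ => σ (ball x r) :=
      Monotone.measurable fun t t' htt' => measure_mono (ball_subset_ball htt')
    have h2 : Measurable fun r : ℝ => ENNReal.ofReal ((2*r) ^ κ) :=
      ((measurable_const_mul 2).pow measurable_const).ennreal_ofReal
    have h3 : Measurable fun r : ℝ => ENNReal.ofReal (1 / (2*r)) :=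
      (measurable_const.div (measurable_const_mul 2)).ennreal_ofReal
    exact ((h1.div h2).pow measurable_const).mul h3
  have step1 : ∫⁻ s in Ioi (2*t), F (s/2) ≤ wolff n α p σ y := by
    unfold wolff
    have hsub : (Ioi (2*t) : Set ℝ) ⊆ Ioi (0:ℝ) := Ioi_subset_Ioi (by linarith)
    refine le_trans ?_ (lintegral_mono' (Measure.restrict_mono hsub le_rfl) le_rfl)
    apply setLIntegral_mono_mem measurableSet_Ioi
    intro s hs
    simp only [mem_Ioi] at hs
    have hs0 : 0 < s := by linarith
    have h2s : 2 * (s/2) = s := by ring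
    have hball : ball x (s/2) ⊆ ball y s := by
      intro z hz
      simp only [mem_ball] at hz hy ⊢
      have h1 := dist_triangle z x y
      rw [dist_comm x y] at h1
      linarith
    show (σ (ball x (s/2)) / ENNReal.ofReal ((2*(s/2)) ^ κ)) ^ e
        * ENNReal.ofReal (1 / (2*(s/2)))
      ≤ (σ (ball y s) / ENNReal.ofReal (s ^ κ)) ^ e * ENNReal.ofReal (1 / s)
    rw [h2s]
    apply mul_le_mul_left
    apply ENNReal.rpow_le_rpow _ he
    exact ENNReal.div_le_div_right (measure_mono hball) _
  have step2 : ∫⁻ s in Ioi (2*t), F (s/2) = 2 * ∫⁻ r in Ioi t, F r :=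
    half_subst F hFmeas t
  have step3 : ∫⁻ r in Ioi t, F r
      = ((ENNReal.ofReal ((2:ℝ) ^ κ))⁻¹ ^ e * ENNReal.ofReal (1/2)) *
        ∫⁻ r in Ioi t, (σ (ball x r) / ENNReal.ofReal (r ^ κ)) ^ e
          * ENNReal.ofReal (1/r) := by
    rw [← lintegral_const_mul']
    swap
    · refine ENNReal.mul_ne_top (ENNReal.rpow_ne_top_of_nonneg he
        (ENNReal.inv_ne_top.2 ?_)) ENNReal.ofReal_ne_top
      simp only [ne_eq, ENNReal.ofReal_eq_zero, not_le]
      exact Real.rpow_pos_of_pos (by norm_num) κ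
    apply setLIntegral_congr_mem measurableSet_Ioi
    intro r hr
    simp only [mem_Ioi] at hr
    have hr0 : 0 < r := lt_trans ht hr
    have h2κ : (0:ℝ) < (2:ℝ) ^ κ := Real.rpow_pos_of_pos (by norm_num) κ
    have hA : ENNReal.ofReal ((2*r) ^ κ) = ENNReal.ofReal ((2:ℝ)^κ) * ENNReal.ofReal (r^κ) := by
      rw [Real.mul_rpow (by norm_num) hr0.le, ENNReal.ofReal_mul h2κ.le]
    have hdiv : σ (ball x r) / ENNReal.ofReal ((2*r) ^ κ)
        = (ENNReal.ofReal ((2:ℝ)^κ))⁻¹ * (σ (ball x r) / ENNReal.ofReal (r^κ)) := by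
      rw [hA, div_eq_mul_inv, ENNReal.mul_inv (Or.inl (by
          simp only [ne_eq, ENNReal.ofReal_eq_zero, not_le]; exact h2κ))
        (Or.inl ENNReal.ofReal_ne_top), div_eq_mul_inv]
      ring
    have h12 : (1:ℝ) / (2*r) = (1/2) * (1/r) := by ring
    show (σ (ball x r) / ENNReal.ofReal ((2*r) ^ κ)) ^ e * ENNReal.ofReal (1 / (2*r)) = _
    rw [hdiv, ENNReal.mul_rpow_of_nonneg _ _ he, h12,
      ENNReal.ofReal_mul (by norm_num : (0:ℝ) ≤ 1/2)]
    ring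
  have hcoef : 2 * (((ENNReal.ofReal ((2:ℝ) ^ κ))⁻¹ ^ e * ENNReal.ofReal (1/2)))
      = ENNReal.ofReal (((2:ℝ) ^ κ) ^ (-e)) := by
    have h2κ : (0:ℝ) < (2:ℝ) ^ κ := Real.rpow_pos_of_pos (by norm_num) κ
    have h1 : (ENNReal.ofReal ((2:ℝ) ^ κ))⁻¹ ^ e = ENNReal.ofReal (((2:ℝ) ^ κ) ^ (-e)) := by
      rw [ENNReal.inv_rpow, ENNReal.ofReal_rpow_of_pos h2κ,
        ← ENNReal.ofReal_inv_of_pos (Real.rpow_pos_of_pos h2κ e),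
        ← Real.rpow_neg h2κ.le]
    have h2 : ENNReal.ofReal ((1:ℝ)/2) = 2⁻¹ := by
      rw [one_div, ENNReal.ofReal_inv_of_pos (by norm_num)]
      norm_num
    rw [h1, h2]
    rw [mul_comm (ENNReal.ofReal _) _, ← mul_assoc,
      ENNReal.mul_inv_cancel (by norm_num) (by norm_num), one_mul]
  calc ENNReal.ofReal (((2:ℝ) ^ κ) ^ (-e)) *
      ∫⁻ s in Ioi t, (σ (ball x s) / ENNReal.ofReal (s ^ κ)) ^ e * ENNReal.ofReal (1/s)
      = 2 * ∫⁻ r in Ioi t, F r := by rw [step3, ← mul_assoc, hcoef]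
    _ = ∫⁻ s in Ioi (2*t), F (s/2) := step2.symm
    _ ≤ wolff n α p σ y := step1


lemma one_side (n : ℕ) (p α q γa γb lam : ℝ) (hp : 1 < p)
    (hq : 0 ≤ q) (hγb : 0 ≤ γb) (hlam : 0 < lam)
    (hγa : γa = 1 + γb * (q * (1/(p-1))))
    (hlam2 : lam ≤ lam ^ (q * (1/(p-1))) *
      ((((2:ℝ) ^ ((n:ℝ) - α*p)) ^ (-(1/(p-1)))) ^ (γb * (q * (1/(p-1)))) * ((2:ℝ)⁻¹) ^ γa))
    (σ : Measure (Rn n)) (x : Rn n) :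
    ENNReal.ofReal lam * (wolff n α p σ x) ^ γa ≤
      wolff n α p (σ.withDensity fun y =>
        (ENNReal.ofReal lam * (wolff n α p σ y) ^ γb) ^ q) x := by
  have hp1 : (0:ℝ) < p - 1 := by linarith
  have he : (0:ℝ) ≤ 1/(p-1) := by positivity
  set κ : ℝ := (n:ℝ) - α * p with hκ
  set e : ℝ := 1/(p-1) with hee
  set cr : ℝ := ((2:ℝ) ^ κ) ^ (-e) with hcr
  have hcrpos : 0 < cr := Real.rpow_pos_of_pos (Real.rpow_pos_of_pos (by norm_num) κ) _
  set β : ℝ := γb * (q * e) with hβdef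
  have hβ : 0 ≤ β := by positivity
  have hqe : 0 ≤ q * e := by positivity
  have hγa0 : 0 ≤ γa := by rw [hγa]; positivity
  set g : ℝ → ℝ≥0∞ := fun t =>
    (σ (ball x t) / ENNReal.ofReal (t ^ κ)) ^ e * ENNReal.ofReal (1/t) with hgdef
  have hgmeas : Measurable g := g_meas n α p σ x
  set G : ℝ → ℝ≥0∞ := fun t => ∫⁻ s in Ioi t, g s with hGdef
  set f : Rn n → ℝ≥0∞ := fun y => (ENNReal.ofReal lam * (wolff n α p σ y) ^ γb) ^ q with hfdef
  set K : ℝ := lam ^ (q * e) * cr ^ β with hK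
  have hW : wolff n α p σ x = ∫⁻ t in Ioi (0:ℝ), g t := rfl
  -- pointwise integrand bound
  have stepA : ∀ t ∈ Ioi (0:ℝ),
      ENNReal.ofReal K * (g t * G t ^ β)
        ≤ ((σ.withDensity f) (ball x t) / ENNReal.ofReal (t ^ κ)) ^ e
            * ENNReal.ofReal (1/t) := by
    intro t ht
    simp only [mem_Ioi] at ht
    have hball : ∀ y ∈ ball x t, ENNReal.ofReal cr * G t ≤ wolff n α p σ y := by
      intro y hy
      exact wolff_ball_lower n α p he σ x t ht y hy
    set C : ℝ≥0∞ := (ENNReal.ofReal lam * (ENNReal.ofReal cr * G t) ^ γb) ^ q with hC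
    have hCσ : C * σ (ball x t) ≤ (σ.withDensity f) (ball x t) := by
      rw [withDensity_apply f measurableSet_ball, ← setLIntegral_const]
      apply setLIntegral_mono_mem measurableSet_ball
      intro y hy
      apply ENNReal.rpow_le_rpow _ hq
      exact mul_le_mul_right (ENNReal.rpow_le_rpow (hball y hy) hγb) _
    have hCe : C ^ e = ENNReal.ofReal K * G t ^ β := by
      rw [hC, ← ENNReal.rpow_mul, ENNReal.mul_rpow_of_nonneg _ _ hqe,
        ← ENNReal.rpow_mul, ENNReal.mul_rpow_of_nonneg _ _ hβ,
        ENNReal.ofReal_rpow_of_pos hlam, ENNReal.ofReal_rpow_of_pos hcrpos,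
        hK, ENNReal.ofReal_mul (by positivity)]
      ring
    calc ENNReal.ofReal K * (g t * G t ^ β)
        = (C ^ e) * g t := by rw [hCe]; ring
      _ = ((C * σ (ball x t)) / ENNReal.ofReal (t ^ κ)) ^ e * ENNReal.ofReal (1/t) := by
          rw [mul_div_assoc, ENNReal.mul_rpow_of_nonneg _ _ he]
          rw [hgdef]
          ring
      _ ≤ ((σ.withDensity f) (ball x t) / ENNReal.ofReal (t ^ κ)) ^ e
            * ENNReal.ofReal (1/t) :=
          mul_le_mul_left (ENNReal.rpow_le_rpow
            (ENNReal.div_le_div_right hCσ _) he) _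
  -- integrate
  have stepB : ENNReal.ofReal K * ((∫⁻ t in Ioi (0:ℝ), g t)/2) ^ (1+β)
      ≤ wolff n α p (σ.withDensity f) x := by
    calc ENNReal.ofReal K * ((∫⁻ t in Ioi (0:ℝ), g t)/2) ^ (1+β)
        ≤ ENNReal.ofReal K * ∫⁻ t in Ioi (0:ℝ), g t * G t ^ β :=
          mul_le_mul_right (key g hgmeas β hβ) _
      _ = ∫⁻ t in Ioi (0:ℝ), ENNReal.ofReal K * (g t * G t ^ β) :=
          (lintegral_const_mul' _ _ ENNReal.ofReal_ne_top).symm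
      _ ≤ ∫⁻ t in Ioi (0:ℝ),
            ((σ.withDensity f) (ball x t) / ENNReal.ofReal (t ^ κ)) ^ e
              * ENNReal.ofReal (1/t) :=
          setLIntegral_mono_mem measurableSet_Ioi stepA
      _ = wolff n α p (σ.withDensity f) x := rfl
  -- scalar comparison
  have hscalar : ENNReal.ofReal lam
      ≤ ENNReal.ofReal K * ENNReal.ofReal ((2⁻¹:ℝ) ^ γa) := by
    rw [← ENNReal.ofReal_mul (by positivity)]
    apply ENNReal.ofReal_le_ofReal
    calc lam ≤ lam ^ (q * (1/(p-1))) *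
        ((((2:ℝ) ^ ((n:ℝ) - α*p)) ^ (-(1/(p-1)))) ^ (γb * (q * (1/(p-1)))) *
          ((2:ℝ)⁻¹) ^ γa) := hlam2
      _ = K * (2⁻¹:ℝ) ^ γa := by rw [hK, hcr, hee, hκ, hβdef]; ring
  have hhalf : ((∫⁻ t in Ioi (0:ℝ), g t)/2) ^ (1+β)
      = (wolff n α p σ x) ^ γa * ENNReal.ofReal ((2⁻¹:ℝ) ^ γa) := by
    have h2 : (2:ℝ≥0∞)⁻¹ = ENNReal.ofReal (2⁻¹:ℝ) := by
      rw [ENNReal.ofReal_inv_of_pos (by norm_num)]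
      norm_num
    rw [← hγa, hW, div_eq_mul_inv, ENNReal.mul_rpow_of_nonneg _ _ hγa0, h2,
      ENNReal.ofReal_rpow_of_pos (by norm_num)]
  calc ENNReal.ofReal lam * (wolff n α p σ x) ^ γa
      ≤ (ENNReal.ofReal K * ENNReal.ofReal ((2⁻¹:ℝ) ^ γa)) * (wolff n α p σ x) ^ γa :=
        mul_le_mul_left hscalar _
    _ = ENNReal.ofReal K * ((∫⁻ t in Ioi (0:ℝ), g t)/2) ^ (1+β) := by
        rw [hhalf]; ring
    _ ≤ wolff n α p (σ.withDensity f) x := stepB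

end WolffAux

/-- Claim 2 in the proof of Theorem 1.1: for a sufficiently small `λ₁ > 0`, the pair
`(λ₁ (W_{α,p}σ)^{γ₁}, λ₁ (W_{α,p}σ)^{γ₂})` is a subsolution of the Wolff integral system. -/
theorem wolff_subsolution (n : ℕ) (hn : 1 ≤ n) (p α q₁ q₂ : ℝ)
    (hp : 1 < p) (hα : 0 < α) (hαn : α < (n : ℝ) / p)
    (hq₁ : 0 < q₁) (hq₁' : q₁ < p - 1) (hq₂ : 0 < q₂) (hq₂' : q₂ < p - 1) :
    ∃ lam₁ : ℝ, 0 < lam₁ ∧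
      ∀ σ : Measure (Rn n), IsLocallyFiniteMeasure σ →
        (∀ x : Rn n,
          ENNReal.ofReal lam₁ * (wolff n α p σ x) ^ gamma1 p q₁ q₂ ≤
            wolff n α p (σ.withDensity fun y =>
              (ENNReal.ofReal lam₁ * (wolff n α p σ y) ^ gamma2 p q₁ q₂) ^ q₁) x) ∧
        (∀ x : Rn n,
          ENNReal.ofReal lam₁ * (wolff n α p σ x) ^ gamma2 p q₁ q₂ ≤
            wolff n α p (σ.withDensity fun y =>
              (ENNReal.ofReal lam₁ * (wolff n α p σ y) ^ gamma1 p q₁ q₂) ^ q₂) x) := by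
  have hp1 : (0:ℝ) < p - 1 := by linarith
  have hΔ : (0:ℝ) < (p-1)^2 - q₁*q₂ := by nlinarith
  set γ₁ : ℝ := gamma1 p q₁ q₂ with hγ₁def
  set γ₂ : ℝ := gamma2 p q₁ q₂ with hγ₂def
  have hγ₁pos : 0 < γ₁ := by
    rw [hγ₁def]; unfold gamma1; positivity
  have hγ₂pos : 0 < γ₂ := by
    rw [hγ₂def]; unfold gamma2; positivity
  have hid1 : γ₁ = 1 + γ₂ * (q₁ * (1/(p-1))) := by
    rw [hγ₁def, hγ₂def]; unfold gamma1 gamma2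
    field_simp
    ring
  have hid2 : γ₂ = 1 + γ₁ * (q₂ * (1/(p-1))) := by
    rw [hγ₁def, hγ₂def]; unfold gamma1 gamma2
    have e : (p-1)*(p-1+q₁)/((p-1)^2-q₁*q₂)*(q₂*(1/(p-1))) = (p-1+q₁)*q₂/((p-1)^2-q₁*q₂) := by
      rw [mul_one_div, div_mul_div_comm, div_eq_div_iff (mul_ne_zero hΔ.ne' hp1.ne') hΔ.ne']
      ring
    rw [e, div_eq_iff hΔ.ne', add_mul, div_mul_cancel₀ _ hΔ.ne']
    ring
  set cr : ℝ := ((2:ℝ) ^ ((n:ℝ) - α*p)) ^ (-(1/(p-1))) with hcrdef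
  have hcrpos : 0 < cr := Real.rpow_pos_of_pos (Real.rpow_pos_of_pos (by norm_num) _) _
  set D₁ : ℝ := cr ^ (γ₂ * (q₁ * (1/(p-1)))) * ((2:ℝ)⁻¹) ^ γ₁ with hD₁def
  set D₂ : ℝ := cr ^ (γ₁ * (q₂ * (1/(p-1)))) * ((2:ℝ)⁻¹) ^ γ₂ with hD₂def
  have hD₁pos : 0 < D₁ :=
    mul_pos (Real.rpow_pos_of_pos hcrpos _) (Real.rpow_pos_of_pos (by norm_num) _)
  have hD₂pos : 0 < D₂ :=
    mul_pos (Real.rpow_pos_of_pos hcrpos _) (Real.rpow_pos_of_pos (by norm_num) _)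
  set ε₁ : ℝ := 1 - q₁ * (1/(p-1)) with hε₁def
  set ε₂ : ℝ := 1 - q₂ * (1/(p-1)) with hε₂def
  have hε₁pos : 0 < ε₁ := by
    rw [hε₁def, mul_one_div]
    have : q₁ / (p-1) < 1 := (div_lt_one hp1).2 hq₁'
    linarith
  have hε₂pos : 0 < ε₂ := by
    rw [hε₂def, mul_one_div]
    have : q₂ / (p-1) < 1 := (div_lt_one hp1).2 hq₂'
    linarith
  set lam₁ : ℝ := min (D₁ ^ ε₁⁻¹) (D₂ ^ ε₂⁻¹) with hlamdef
  have hlampos : 0 < lam₁ :=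
    lt_min (Real.rpow_pos_of_pos hD₁pos _) (Real.rpow_pos_of_pos hD₂pos _)
  have hpow : ∀ (D ε q' : ℝ), 0 < D → 0 < ε → 0 ≤ q' → ε = 1 - q' → lam₁ ≤ D ^ ε⁻¹ →
      lam₁ ≤ lam₁ ^ q' * D := by
    intro D ε q' hD hε hq' hεq hle
    have h1 : lam₁ ^ ε ≤ D := by
      calc lam₁ ^ ε ≤ (D ^ ε⁻¹) ^ ε := Real.rpow_le_rpow hlampos.le hle hε.le
        _ = D := by
          rw [← Real.rpow_mul hD.le, inv_mul_cancel₀ hε.ne', Real.rpow_one]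
    calc lam₁ = lam₁ ^ (ε + q') := by
          rw [hεq]; ring_nf; rw [Real.rpow_one]
      _ = lam₁ ^ ε * lam₁ ^ q' := Real.rpow_add hlampos ε q'
      _ ≤ D * lam₁ ^ q' := mul_le_mul_of_nonneg_right h1 (Real.rpow_nonneg hlampos.le _)
      _ = lam₁ ^ q' * D := mul_comm _ _
  have hq₁e : (0:ℝ) ≤ q₁ * (1/(p-1)) := by positivity
  have hq₂e : (0:ℝ) ≤ q₂ * (1/(p-1)) := by positivity
  have hlam2₁ : lam₁ ≤ lam₁ ^ (q₁ * (1/(p-1))) * D₁ :=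
    hpow D₁ ε₁ (q₁ * (1/(p-1))) hD₁pos hε₁pos hq₁e hε₁def (min_le_left _ _)
  have hlam2₂ : lam₁ ≤ lam₁ ^ (q₂ * (1/(p-1))) * D₂ :=
    hpow D₂ ε₂ (q₂ * (1/(p-1))) hD₂pos hε₂pos hq₂e hε₂def (min_le_right _ _)
  refine ⟨lam₁, hlampos, fun σ _ => ⟨fun x => ?_, fun x => ?_⟩⟩
  · exact WolffAux.one_side n p α q₁ γ₁ γ₂ lam₁ hp hq₁.le hγ₂pos.le hlampos hid1 hlam2₁ σ x
  · exact WolffAux.one_side n p α q₂ γ₂ γ₁ lam₁ hp hq₂.le hγ₁pos.le hlampos hid2 hlam2₂ σ x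
end
end

section
/- Let n ≥ 1, 1 < p < ∞, 0 < q₁ < p−1, 0 < q₂ < p−1, 0 < α < n/p, and let σ be a nonnegative Radon measure on ℝⁿ satisfying condition (F) and condition (W_λ) for some λ > 0. Then there exists λ₂ > 0 depending only on p, q₁, q₂ and λ such that the functions ū = λ₂ (W_{α,p}σ + (W_{α,p}σ)^{γ₁}) and v̄ = λ₂ (W_{α,p}σ + (W_{α,p}σ)^{γ₂}) satisfy ū(x) ≥ W_{α,p}(v̄^{q₁} dσ)(x) and v̄(x) ≥ W_{α,p}(ū^{q₂} dσ)(x) for Lebesgue-a.e. x ∈ ℝⁿ. -/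
open MeasureTheory Metric Set ENNReal

noncomputable section

namespace WolffAux

lemma measurable_integrand {n : ℕ} (μ : Measure (Rn n)) (x : Rn n) (r β : ℝ) :
    Measurable fun t : ℝ =>
      (μ (ball x t) / ENNReal.ofReal (t ^ β)) ^ r * ENNReal.ofReal (1 / t) := by
  have h1 : Measurable fun t : ℝ => μ (ball x t) :=
    Monotone.measurable (fun a b hab => measure_mono (ball_subset_ball hab))
  have h2 : Measurable fun t : ℝ => ENNReal.ofReal (t ^ β) :=
    (measurable_id.pow measurable_const).ennreal_ofReal
  exact ((h1.div h2).pow measurable_const).mul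
    (measurable_const.div measurable_id).ennreal_ofReal

lemma wolff_mono {n : ℕ} {α p : ℝ} {μ ν : Measure (Rn n)} (h : μ ≤ ν)
    (hr : 0 ≤ 1 / (p - 1)) (x : Rn n) : wolff n α p μ x ≤ wolff n α p ν x := by
  refine lintegral_mono fun t => mul_le_mul_left ?_ _
  exact ENNReal.rpow_le_rpow (ENNReal.div_le_div_right
    (Measure.le_iff.mp h _ measurableSet_ball) _) hr

lemma wolff_smul {n : ℕ} {α p : ℝ} {c : ℝ≥0∞} (hc : c ≠ ∞) (hr : 0 ≤ 1 / (p - 1))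
    (μ : Measure (Rn n)) (x : Rn n) :
    wolff n α p (c • μ) x = c ^ (1 / (p - 1)) * wolff n α p μ x := by
  unfold wolff
  rw [← lintegral_const_mul' _ _ (ENNReal.rpow_ne_top_of_nonneg hr hc)]
  refine lintegral_congr fun t => ?_
  rw [Measure.smul_apply, smul_eq_mul, mul_div_assoc,
    ENNReal.mul_rpow_of_nonneg _ _ hr, mul_assoc]

lemma rpow_add_le (A B : ℝ≥0∞) {r : ℝ} (hr : 0 ≤ r) :
    (A + B) ^ r ≤ 2 ^ r * (A ^ r + B ^ r) := by
  have h1 : A + B ≤ 2 * max A B := by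
    rw [two_mul]; exact add_le_add (le_max_left _ _) (le_max_right _ _)
  calc (A + B) ^ r ≤ (2 * max A B) ^ r := ENNReal.rpow_le_rpow h1 hr
    _ = 2 ^ r * (max A B) ^ r := ENNReal.mul_rpow_of_nonneg _ _ hr
    _ ≤ 2 ^ r * (A ^ r + B ^ r) := by
        refine mul_le_mul_right ?_ _
        rcases le_total A B with h | h
        · rw [max_eq_right h]; exact le_add_self
        · rw [max_eq_left h]; exact le_self_add

lemma wolff_add {n : ℕ} {α p : ℝ} (μ ν : Measure (Rn n)) (x : Rn n)
    (hr : 0 ≤ 1 / (p - 1)) :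
    wolff n α p (μ + ν) x
      ≤ 2 ^ (1 / (p - 1)) * (wolff n α p μ x + wolff n α p ν x) := by
  set r := 1 / (p - 1) with hrdef
  unfold wolff
  set β := ((n : ℝ) - α * p)
  calc ∫⁻ t in Ioi (0:ℝ), ((μ + ν) (ball x t) / ENNReal.ofReal (t ^ β)) ^ r
          * ENNReal.ofReal (1 / t)
      ≤ ∫⁻ t in Ioi (0:ℝ), 2 ^ r *
          ((μ (ball x t) / ENNReal.ofReal (t ^ β)) ^ r * ENNReal.ofReal (1 / t)
            + (ν (ball x t) / ENNReal.ofReal (t ^ β)) ^ r * ENNReal.ofReal (1 / t)) := by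
        refine lintegral_mono fun t => ?_
        rw [Measure.add_apply, ENNReal.add_div]
        calc (μ (ball x t) / ENNReal.ofReal (t ^ β)
                + ν (ball x t) / ENNReal.ofReal (t ^ β)) ^ r * ENNReal.ofReal (1 / t)
            ≤ (2 ^ r * ((μ (ball x t) / ENNReal.ofReal (t ^ β)) ^ r
                + (ν (ball x t) / ENNReal.ofReal (t ^ β)) ^ r)) * ENNReal.ofReal (1 / t) :=
              mul_le_mul_left (rpow_add_le _ _ hr) _
          _ = _ := by ring
    _ = 2 ^ r * ((∫⁻ t in Ioi (0:ℝ), (μ (ball x t) / ENNReal.ofReal (t ^ β)) ^ r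
          * ENNReal.ofReal (1 / t))
          + ∫⁻ t in Ioi (0:ℝ), (ν (ball x t) / ENNReal.ofReal (t ^ β)) ^ r
          * ENNReal.ofReal (1 / t)) := by
        rw [lintegral_const_mul' _ _ (ENNReal.rpow_ne_top_of_nonneg hr (by norm_num)),
          lintegral_add_left (measurable_integrand μ x r β)]

lemma aux_pow (a : ℝ≥0∞) {γ q : ℝ} (hγ : 1 ≤ γ) (hq : 0 ≤ q) :
    (a + a ^ γ) ^ q ≤ 2 ^ q * (1 + 2 * a ^ (γ * q)) := by
  refine (rpow_add_le a (a ^ γ) hq).trans (mul_le_mul_right ?_ _)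
  rw [← ENNReal.rpow_mul]
  have h1 : a ^ q ≤ 1 + a ^ (γ * q) := by
    rcases le_total a 1 with h | h
    · exact (ENNReal.rpow_le_one h hq).trans le_self_add
    · exact (ENNReal.rpow_le_rpow_of_exponent_le h
        (le_mul_of_one_le_left hq hγ)).trans le_add_self
  calc a ^ q + a ^ (γ * q) ≤ (1 + a ^ (γ * q)) + a ^ (γ * q) := add_le_add_left h1 _
    _ = 1 + 2 * a ^ (γ * q) := by ring

lemma key_s12 {p q γ' γ lam lam₂ : ℝ} (hp : 1 < p) (hq : 0 < q) (hγ' : 1 ≤ γ')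
    {n : ℕ} {α : ℝ} (σ : Measure (Rn n)) (x : Rn n)
    (hW : wolff n α p (σ.withDensity fun y => (wolff n α p σ y) ^ (γ' * q)) x
      ≤ ENNReal.ofReal lam * (wolff n α p σ x + (wolff n α p σ x) ^ γ))
    (hlam : 0 < lam) (hlam₂ : 0 < lam₂)
    (hineq : 2 ^ (1 / (p - 1)) * (lam₂ ^ q * 2 ^ q) ^ (1 / (p - 1))
        * (1 + 2 ^ (1 / (p - 1)) * lam) ≤ lam₂) :
    wolff n α p (σ.withDensity fun y =>
      (ENNReal.ofReal lam₂ * (wolff n α p σ y + (wolff n α p σ y) ^ γ')) ^ q) x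
      ≤ ENNReal.ofReal lam₂ * (wolff n α p σ x + (wolff n α p σ x) ^ γ) := by
  have hr : 0 ≤ 1 / (p - 1) := div_nonneg zero_le_one (by linarith)
  set r := 1 / (p - 1) with hrdef
  set W : Rn n → ℝ≥0∞ := wolff n α p σ with hWdef
  set g : Rn n → ℝ≥0∞ := fun y => (W y) ^ (γ' * q) with hgdef
  set c : ℝ≥0∞ := ENNReal.ofReal lam₂ ^ q * 2 ^ q with hcdef
  have hc_ne : c ≠ ∞ := by
    apply ENNReal.mul_ne_top
    · exact ENNReal.rpow_ne_top_of_nonneg hq.le ENNReal.ofReal_ne_top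
    · exact ENNReal.rpow_ne_top_of_nonneg hq.le (by norm_num)
  have h2c_ne : 2 * c ≠ ∞ := ENNReal.mul_ne_top (by norm_num) hc_ne
  set ν : Measure (Rn n) := σ.withDensity g with hνdef
  -- density pointwise bound
  have hdens : ∀ y, (ENNReal.ofReal lam₂ * (W y + (W y) ^ γ')) ^ q
      ≤ c + (2 * c) * g y := fun y => by
    rw [ENNReal.mul_rpow_of_nonneg _ _ hq.le]
    calc ENNReal.ofReal lam₂ ^ q * (W y + (W y) ^ γ') ^ q
        ≤ ENNReal.ofReal lam₂ ^ q * (2 ^ q * (1 + 2 * (W y) ^ (γ' * q))) :=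
          mul_le_mul_right (aux_pow _ hγ' hq.le) _
      _ = c + (2 * c) * g y := by rw [hcdef, hgdef]; ring
  -- measure bound
  have hmeas : σ.withDensity (fun y =>
      (ENNReal.ofReal lam₂ * (W y + (W y) ^ γ')) ^ q) ≤ c • σ + (2 * c) • ν := by
    rw [Measure.le_iff]
    intro s hs
    rw [withDensity_apply _ hs]
    calc ∫⁻ y in s, (ENNReal.ofReal lam₂ * (W y + (W y) ^ γ')) ^ q ∂σ
        ≤ ∫⁻ y in s, (c + (2 * c) * g y) ∂σ := lintegral_mono fun y => hdens y
      _ = c * σ s + (2 * c) * ∫⁻ y in s, g y ∂σ := by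
          rw [lintegral_add_left measurable_const, setLIntegral_const,
            lintegral_const_mul' _ _ h2c_ne]
      _ = (c • σ + (2 * c) • ν) s := by
          rw [Measure.add_apply, Measure.smul_apply, Measure.smul_apply,
            smul_eq_mul, smul_eq_mul, hνdef, withDensity_apply _ hs]
  -- main chain
  have hM : W x ≤ W x + (W x) ^ γ := le_self_add
  calc wolff n α p (σ.withDensity fun y =>
        (ENNReal.ofReal lam₂ * (W y + (W y) ^ γ')) ^ q) x
      ≤ wolff n α p (c • σ + (2 * c) • ν) x := wolff_mono hmeas hr x
    _ ≤ 2 ^ r * (wolff n α p (c • σ) x + wolff n α p ((2 * c) • ν) x) :=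
        wolff_add _ _ x hr
    _ = 2 ^ r * (c ^ r * W x + (2 * c) ^ r * wolff n α p ν x) := by
        rw [wolff_smul hc_ne hr, wolff_smul h2c_ne hr]
    _ ≤ 2 ^ r * (c ^ r * (W x + (W x) ^ γ)
          + (2 * c) ^ r * (ENNReal.ofReal lam * (W x + (W x) ^ γ))) := by
        gcongr
    _ = (2 ^ r * c ^ r * (1 + 2 ^ r * ENNReal.ofReal lam)) * (W x + (W x) ^ γ) := by
        have e : ((2 : ℝ≥0∞) * c) ^ r = 2 ^ r * c ^ r := ENNReal.mul_rpow_of_nonneg _ _ hr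
        rw [e]; ring
    _ ≤ ENNReal.ofReal lam₂ * (W x + (W x) ^ γ) := by
        refine mul_le_mul_left ?_ _
        have e1 : (2 : ℝ≥0∞) ^ r = ENNReal.ofReal (2 ^ r) := by
          rw [← ENNReal.ofReal_rpow_of_pos (by norm_num)]
          norm_num
        have e2 : c ^ r = ENNReal.ofReal ((lam₂ ^ q * 2 ^ q) ^ r) := by
          rw [hcdef, show (2 : ℝ≥0∞) = ENNReal.ofReal 2 by norm_num,
            ENNReal.ofReal_rpow_of_pos hlam₂,
            ENNReal.ofReal_rpow_of_pos (by norm_num : (0:ℝ) < 2),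
            ← ENNReal.ofReal_mul (by positivity),
            ENNReal.ofReal_rpow_of_pos (by positivity)]
        rw [e1, e2, ← ENNReal.ofReal_mul (by positivity),
          ← ENNReal.ofReal_mul (by positivity),
          ← ENNReal.ofReal_one, ← ENNReal.ofReal_add (by norm_num) (by positivity),
          ← ENNReal.ofReal_mul (by positivity)]
        exact ENNReal.ofReal_le_ofReal (le_of_eq_of_le (by ring) hineq)

lemma exists_lam2 {r lam q₁ q₂ : ℝ} (hr : 0 < r) (hq₁ : 0 < q₁) (hq₂ : 0 < q₂)
    (h1 : q₁ * r < 1) (h2 : q₂ * r < 1) (hlam : 0 < lam) :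
    ∃ l : ℝ, 0 < l ∧ ∀ q : ℝ, 0 < q → (q = q₁ ∨ q = q₂) →
      2 ^ r * (l ^ q * 2 ^ q) ^ r * (1 + 2 ^ r * lam) ≤ l := by
  set θ : ℝ := max q₁ q₂ * r with hθdef
  have hθ0 : 0 < θ := mul_pos (lt_max_of_lt_left hq₁) hr
  have hθ1 : θ < 1 := by
    rcases max_choice q₁ q₂ with h | h <;> rw [hθdef, h] <;> assumption
  set B : ℝ → ℝ := fun q => 2 ^ r * 2 ^ (q * r) * (1 + 2 ^ r * lam) with hBdef
  have hBpos : ∀ q, 0 < B q := fun q => by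
    have : (0:ℝ) < (2:ℝ) ^ r := Real.rpow_pos_of_pos two_pos r
    have : (0:ℝ) < (2:ℝ) ^ (q*r) := Real.rpow_pos_of_pos two_pos _
    positivity
  set C : ℝ := max (B q₁) (B q₂) + 1 with hCdef
  have hC1 : 1 ≤ C := by
    have := (hBpos q₁).le.trans (le_max_left (B q₁) (B q₂))
    simp only [hCdef]; linarith
  set l : ℝ := C ^ (1 / (1 - θ)) with hldef
  have hl1 : 1 ≤ l := Real.one_le_rpow hC1 (div_nonneg zero_le_one (by linarith))
  have hl0 : 0 < l := lt_of_lt_of_le one_pos hl1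
  have hlC : l ^ (1 - θ) = C := by
    rw [hldef, ← Real.rpow_mul (by linarith : (0:ℝ) ≤ C),
      one_div_mul_cancel (by linarith : (1:ℝ) - θ ≠ 0), Real.rpow_one]
  refine ⟨l, hl0, fun q hq hqor => ?_⟩
  have hqrθ : q * r ≤ θ := by
    rcases hqor with h | h <;> subst h <;>
      exact mul_le_mul_of_nonneg_right (by simp [le_max_left, le_max_right]) hr.le
  have key1 : 2 ^ r * (l ^ q * 2 ^ q) ^ r * (1 + 2 ^ r * lam) = l ^ (q * r) * B q := by
    rw [Real.mul_rpow (by positivity) (by positivity),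
      ← Real.rpow_mul hl0.le, ← Real.rpow_mul (by norm_num : (0:ℝ) ≤ 2)]
    simp only [hBdef]; ring
  rw [key1]
  calc l ^ (q * r) * B q ≤ l ^ θ * C := by
        have hB : B q ≤ C := by
          rcases hqor with h | h <;> subst h
          · have := le_max_left (B q) (B q); simp only [hCdef]; linarith [le_max_left (B q) (B q₂)]
          · linarith [le_max_right (B q₁) (B q)]
        exact mul_le_mul (Real.rpow_le_rpow_of_exponent_le hl1 hqrθ) hB (hBpos q).le
          (by positivity)
    _ = l := by rw [← hlC, ← Real.rpow_add hl0, add_sub_cancel, Real.rpow_one]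

end WolffAux

/-- Claim 4 in the proof of Theorem 1.3: under (F) and (W_λ), for some `λ₂ > 0` depending
only on `p, q₁, q₂, λ`, the pair `(λ₂(W_{α,p}σ + (W_{α,p}σ)^{γ₁}), λ₂(W_{α,p}σ +
(W_{α,p}σ)^{γ₂}))` is a supersolution of the Wolff integral system, Lebesgue-a.e. -/


theorem wolff_supersolution_weaker (p q₁ q₂ lam : ℝ)
    (hp : 1 < p) (hq₁ : 0 < q₁) (hq₁' : q₁ < p - 1)
    (hq₂ : 0 < q₂) (hq₂' : q₂ < p - 1) (hlam : 0 < lam) :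
    ∃ lam₂ : ℝ, 0 < lam₂ ∧
      ∀ (n : ℕ), 1 ≤ n →
        ∀ α : ℝ, 0 < α → α < (n : ℝ) / p →
          ∀ σ : Measure (Rn n), IsLocallyFiniteMeasure σ →
            condF n α p σ → condW n α p q₁ q₂ lam σ →
            ∀ᵐ x ∂(volume : Measure (Rn n)),
              (wolff n α p (σ.withDensity fun y =>
                (ENNReal.ofReal lam₂ *
                  (wolff n α p σ y + (wolff n α p σ y) ^ gamma2 p q₁ q₂)) ^ q₁) x ≤
                ENNReal.ofReal lam₂ *
                  (wolff n α p σ x + (wolff n α p σ x) ^ gamma1 p q₁ q₂)) ∧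
              (wolff n α p (σ.withDensity fun y =>
                (ENNReal.ofReal lam₂ *
                  (wolff n α p σ y + (wolff n α p σ y) ^ gamma1 p q₁ q₂)) ^ q₂) x ≤
                ENNReal.ofReal lam₂ *
                  (wolff n α p σ x + (wolff n α p σ x) ^ gamma2 p q₁ q₂)) := by
  have hp1 : (0:ℝ) < p - 1 := by linarith
  have hr0 : 0 < 1 / (p - 1) := div_pos one_pos hp1
  have h1 : q₁ * (1 / (p - 1)) < 1 := by
    rw [mul_one_div, div_lt_one hp1]; linarith
  have h2 : q₂ * (1 / (p - 1)) < 1 := by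
    rw [mul_one_div, div_lt_one hp1]; linarith
  obtain ⟨l, hl, hl2⟩ := WolffAux.exists_lam2 hr0 hq₁ hq₂ h1 h2 hlam
  have hD : 0 < (p - 1) ^ 2 - q₁ * q₂ := by nlinarith
  have hγ1 : 1 ≤ gamma1 p q₁ q₂ := by
    rw [gamma1, le_div_iff₀ hD]; nlinarith
  have hγ2 : 1 ≤ gamma2 p q₁ q₂ := by
    rw [gamma2, le_div_iff₀ hD]; nlinarith
  refine ⟨l, hl, fun n hn α hα hα' σ _ hF hW => ?_⟩
  filter_upwards [hW] with x hx
  exact ⟨WolffAux.key_s12 hp hq₁ hγ2 σ x hx.1 hlam hl (hl2 q₁ hq₁ (Or.inl rfl)),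
    WolffAux.key_s12 hp hq₂ hγ1 σ x hx.2.1 hlam hl (hl2 q₂ hq₂ (Or.inr rfl))⟩
end
end
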